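/- arXiv:1110.2860 — 5 statements merged into one kernel-verified Lean document; each statement's English description precedes it below -/
import Mathlib

section
/- Let N ≥ 1, let μ_1, …, μ_N be pairwise distinct nonzero real numbers and let Λ_1, …, Λ_N be complex numbers. If Im(Σ_{j=1}^N Λ_j e^{i μ_j t}) ≥ 0 for every real t ≥ 0, then Im(Σ_{j=1}^N Λ_j e^{i μ_j t}) = 0 for every real t. -/
open Complex Finset intervalIntegral

lemma aux_int {ι : Type*} [Fintype ι] (ν : ι → ℝ) (c : ι → ℂ) (T : ℝ) :
    (∫ t in (0:ℝ)..T, ∑ i, c i * Complex.exp (Complex.I * ν i * t))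
      = (T : ℂ) * (∑ i, if ν i = 0 then c i else 0)
        + ∑ i, (if ν i = 0 then 0
            else c i * ((Complex.exp (Complex.I * ν i * T) - 1) / (Complex.I * ν i))) := by
  have hint : ∀ i : ι, (∫ t in (0:ℝ)..T, c i * Complex.exp (Complex.I * ν i * t))
      = if ν i = 0 then (T : ℂ) * c i
        else c i * ((Complex.exp (Complex.I * ν i * T) - 1) / (Complex.I * ν i)) := by
    intro i
    rw [intervalIntegral.integral_const_mul]
    by_cases hv : ν i = 0
    · simp [hv, Complex.real_smul, mul_comm]
    · have hc : Complex.I * (ν i : ℂ) ≠ 0 :=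
        mul_ne_zero Complex.I_ne_zero (by exact_mod_cast hv)
      rw [if_neg hv, integral_exp_mul_complex hc]
      simp
  rw [intervalIntegral.integral_finset_sum (fun i _ =>
    (Continuous.intervalIntegrable (by fun_prop) _ _))]
  rw [Finset.sum_congr rfl (fun i _ => hint i)]
  rw [Finset.mul_sum, ← Finset.sum_add_distrib]
  refine Finset.sum_congr rfl fun i _ => ?_
  split <;> simp

lemma aux_rem {ι : Type*} [Fintype ι] (ν : ι → ℝ) (c : ι → ℂ) (T : ℝ) :
    ‖∑ i, (if ν i = 0 then 0
        else c i * ((Complex.exp (Complex.I * ν i * T) - 1) / (Complex.I * ν i)))‖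
      ≤ ∑ i, (if ν i = 0 then 0 else 2 * ‖c i‖ / |ν i|) := by
  refine (norm_sum_le _ _).trans (Finset.sum_le_sum fun i _ => ?_)
  split
  · simp
  · have hnorm : ‖Complex.I * (ν i : ℂ)‖ = |ν i| := by
      rw [norm_mul, Complex.norm_I, one_mul, Complex.norm_real, Real.norm_eq_abs]
    have hexp : ‖Complex.exp (Complex.I * ν i * T)‖ = 1 := by
      rw [Complex.norm_exp]
      simp [Complex.mul_re]
    calc ‖c i * ((Complex.exp (Complex.I * ν i * T) - 1) / (Complex.I * ν i))‖
        = ‖c i‖ * (‖Complex.exp (Complex.I * ν i * T) - 1‖ / |ν i|) := by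
          rw [norm_mul, norm_div, hnorm]
      _ ≤ ‖c i‖ * (2 / |ν i|) := by
          gcongr
          calc ‖Complex.exp (Complex.I * ν i * T) - 1‖
              ≤ ‖Complex.exp (Complex.I * ν i * T)‖ + ‖(1:ℂ)‖ := norm_sub_le _ _
            _ = 2 := by rw [hexp]; norm_num
      _ = 2 * ‖c i‖ / |ν i| := by ring

set_option maxHeartbeats 1000000 in
lemma ext_lemma {ι : Type*} [Fintype ι] (ν : ι → ℝ) (c : ι → ℂ) (C : ℝ)
    (hb : ∀ T : ℝ, 0 ≤ T →
      ‖∫ t in (0:ℝ)..T, ∑ i, c i * Complex.exp (Complex.I * ν i * t)‖ ≤ C) :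
    (∑ i, if ν i = 0 then c i else 0) = 0 := by
  set a : ℂ := ∑ i, if ν i = 0 then c i else 0 with ha
  set D : ℝ := ∑ i : ι, (if ν i = 0 then 0 else 2 * ‖c i‖ / |ν i|) with hD
  have hD0 : 0 ≤ D := Finset.sum_nonneg fun i _ => by split <;> positivity
  have hC0 : 0 ≤ C := le_trans (norm_nonneg _) (hb 0 le_rfl)
  by_contra hane
  have hanorm : 0 < ‖a‖ := norm_pos_iff.mpr hane
  set T : ℝ := (C + D + 1) / ‖a‖ with hT
  have hT0 : 0 ≤ T := by positivity
  have h1 := hb T hT0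
  rw [aux_int] at h1
  have h2 : ‖(T : ℂ) * a‖ ≤ C + D := by
    calc ‖(T : ℂ) * a‖ ≤ ‖(T : ℂ) * a + ∑ i, (if ν i = 0 then 0
            else c i * ((Complex.exp (Complex.I * ν i * T) - 1) / (Complex.I * ν i)))‖
          + ‖∑ i, (if ν i = 0 then 0
            else c i * ((Complex.exp (Complex.I * ν i * T) - 1) / (Complex.I * ν i)))‖ := by
          exact (norm_le_add_norm_add _ _)
      _ ≤ C + D := add_le_add h1 (aux_rem ν c T)
  rw [norm_mul, Complex.norm_real, Real.norm_eq_abs, _root_.abs_of_nonneg hT0, hT,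
    div_mul_cancel₀ _ (ne_of_gt hanorm)] at h2
  linarith

lemma norm_exp_I_mul (x t : ℝ) : ‖Complex.exp (Complex.I * x * t)‖ = 1 := by
  rw [Complex.norm_exp]
  simp [Complex.mul_re]

set_option maxHeartbeats 1000000 in
/-- A finite exponential sum with pairwise distinct nonzero real frequencies whose
imaginary part is nonnegative on the half-line `[0, ∞)` has identically vanishing
imaginary part. -/
theorem stmt_2 (N : ℕ) (hN : 1 ≤ N) (μ : Fin N → ℝ) (hμ : Function.Injective μ)
    (hμ0 : ∀ j, μ j ≠ 0) (Λ : Fin N → ℂ)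
    (h : ∀ t : ℝ, 0 ≤ t →
      0 ≤ (∑ j, Λ j * Complex.exp (Complex.I * (μ j : ℂ) * (t : ℂ))).im) :
    ∀ t : ℝ, (∑ j, Λ j * Complex.exp (Complex.I * (μ j : ℂ) * (t : ℂ))).im = 0 := by
  set g : ℝ → ℂ := fun t => ∑ j, Λ j * Complex.exp (Complex.I * (μ j : ℂ) * (t : ℂ)) with hg
  have hgcont : Continuous g := by fun_prop
  have hconj : ∀ t : ℝ, (starRingEnd ℂ) (g t)
      = ∑ j, (starRingEnd ℂ) (Λ j) * Complex.exp (Complex.I * ((-μ j : ℝ) : ℂ) * t) := by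
    intro t
    rw [hg, map_sum]
    refine Finset.sum_congr rfl fun j _ => ?_
    rw [map_mul, ← Complex.exp_conj]
    congr 1
    simp only [map_mul, Complex.conj_I, Complex.conj_ofReal]
    push_cast
    ring
  set C : ℝ := ∑ j : Fin N, (if μ j = 0 then 0 else 2 * ‖Λ j‖ / |μ j|) with hC
  -- bound on the integral of the imaginary part
  have hbound : ∀ T : ℝ, 0 ≤ T → (∫ t in (0:ℝ)..T, (g t).im) ≤ C := by
    intro T hT
    have hgint : IntervalIntegrable g MeasureTheory.volume 0 T :=
      hgcont.intervalIntegrable _ _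
    have him : (∫ t in (0:ℝ)..T, (g t).im) = (∫ t in (0:ℝ)..T, g t).im := by
      have := Complex.imCLM.intervalIntegral_comp_comm hgint
      simpa using this
    rw [him]
    have hval := aux_int μ Λ T
    have hzero : (∑ j : Fin N, if μ j = 0 then Λ j else 0) = 0 :=
      Finset.sum_eq_zero fun j _ => if_neg (hμ0 j)
    rw [hg]
    calc (∫ t in (0:ℝ)..T, ∑ j, Λ j * Complex.exp (Complex.I * (μ j : ℂ) * (t : ℂ))).im
        ≤ ‖∫ t in (0:ℝ)..T, ∑ j, Λ j * Complex.exp (Complex.I * (μ j : ℂ) * (t : ℂ))‖ := by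
          exact Complex.im_le_norm _
      _ ≤ C := by
          rw [hval, hzero, mul_zero, zero_add]
          exact aux_rem μ Λ T
  -- the key coefficient relation
  have R : ∀ j₀ : Fin N, Λ j₀ = ∑ k, if μ k = -μ j₀ then (starRingEnd ℂ) (Λ k) else 0 := by
    intro j₀
    have hext := ext_lemma (ι := Fin N ⊕ Fin N)
        (Sum.elim (fun j => μ j - μ j₀) (fun j => -μ j - μ j₀))
        (Sum.elim Λ (fun j => -(starRingEnd ℂ) (Λ j))) (2 * C) ?_
    · rw [Fintype.sum_sum_type] at hext
      simp only [Sum.elim_inl, Sum.elim_inr] at hext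
      have h1 : (∑ j : Fin N, if μ j - μ j₀ = 0 then Λ j else 0) = Λ j₀ := by
        have : ∀ j : Fin N, (μ j - μ j₀ = 0) ↔ (j = j₀) := by
          intro j
          rw [sub_eq_zero]
          exact ⟨fun hh => hμ hh, fun hh => by rw [hh]⟩
        simp only [this]
        simp
      have h2 : (∑ j : Fin N, if -μ j - μ j₀ = 0 then -(starRingEnd ℂ) (Λ j) else 0)
          = -∑ k, if μ k = -μ j₀ then (starRingEnd ℂ) (Λ k) else 0 := by
        rw [← Finset.sum_neg_distrib]
        refine Finset.sum_congr rfl fun j _ => ?_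
        have : (-μ j - μ j₀ = 0) ↔ (μ j = -μ j₀) := by constructor <;> intro hh <;> linarith
        simp only [this]
        split <;> simp
      erw [h1, h2] at hext
      exact sub_eq_zero.mp (by linear_combination hext)
    · intro T hT
      have hpoint : ∀ t : ℝ,
          (∑ i : Fin N ⊕ Fin N,
            Sum.elim Λ (fun j => -(starRingEnd ℂ) (Λ j)) i *
              Complex.exp (Complex.I *
                ((Sum.elim (fun j => μ j - μ j₀) (fun j => -μ j - μ j₀)) i : ℂ) * t))
          = (g t - (starRingEnd ℂ) (g t)) *
              Complex.exp (Complex.I * ((-μ j₀ : ℝ) : ℂ) * t) := by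
        intro t
        rw [Fintype.sum_sum_type]
        simp only [Sum.elim_inl, Sum.elim_inr]
        rw [sub_mul, hconj, hg]
        simp only [Finset.sum_mul]
        rw [sub_eq_add_neg, ← Finset.sum_neg_distrib]
        congr 1
        · refine Finset.sum_congr rfl fun j _ => ?_
          have he : Complex.I * ((μ j - μ j₀ : ℝ) : ℂ) * t
              = Complex.I * (μ j : ℂ) * t + Complex.I * ((-μ j₀ : ℝ) : ℂ) * t := by
            push_cast; ring
          rw [he, Complex.exp_add]; ring
        · refine Finset.sum_congr rfl fun j _ => ?_
          have he : Complex.I * ((-μ j - μ j₀ : ℝ) : ℂ) * t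
              = Complex.I * ((-μ j : ℝ) : ℂ) * t + Complex.I * ((-μ j₀ : ℝ) : ℂ) * t := by
            push_cast; ring
          rw [he, Complex.exp_add]
          ring
      calc ‖∫ t in (0:ℝ)..T, ∑ i : Fin N ⊕ Fin N,
              Sum.elim Λ (fun j => -(starRingEnd ℂ) (Λ j)) i *
                Complex.exp (Complex.I *
                  ((Sum.elim (fun j => μ j - μ j₀) (fun j => -μ j - μ j₀)) i : ℂ) * t)‖
          ≤ ∫ t in (0:ℝ)..T, ‖∑ i : Fin N ⊕ Fin N,
              Sum.elim Λ (fun j => -(starRingEnd ℂ) (Λ j)) i *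
                Complex.exp (Complex.I *
                  ((Sum.elim (fun j => μ j - μ j₀) (fun j => -μ j - μ j₀)) i : ℂ) * t)‖ :=
            intervalIntegral.norm_integral_le_integral_norm hT
        _ = ∫ t in (0:ℝ)..T, 2 * (g t).im := by
            apply intervalIntegral.integral_congr
            intro t ht
            rw [Set.uIcc_of_le hT] at ht
            simp only [hpoint]
            rw [norm_mul, norm_exp_I_mul, mul_one, Complex.sub_conj, norm_mul,
              Complex.norm_I, mul_one, Complex.norm_real, Real.norm_eq_abs,
              _root_.abs_of_nonneg (mul_nonneg (by norm_num) (h t ht.1))]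
        _ = 2 * ∫ t in (0:ℝ)..T, (g t).im := by
            rw [← intervalIntegral.integral_const_mul]
        _ ≤ 2 * C := by linarith [hbound T hT]
  -- conclude
  intro t
  have key : g t = ∑ k, (starRingEnd ℂ) (Λ k) * Complex.exp (Complex.I * ((-μ k : ℝ) : ℂ) * t) := by
    calc g t = ∑ j, (∑ k, if μ k = -μ j then (starRingEnd ℂ) (Λ k) else 0) *
          Complex.exp (Complex.I * (μ j : ℂ) * t) := by
          rw [hg]
          exact Finset.sum_congr rfl fun j _ => by rw [← R j]
      _ = ∑ j, ∑ k, (if μ k = -μ j then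
            (starRingEnd ℂ) (Λ k) * Complex.exp (Complex.I * (μ j : ℂ) * t) else 0) := by
          refine Finset.sum_congr rfl fun j _ => ?_
          rw [Finset.sum_mul]
          exact Finset.sum_congr rfl fun k _ => by split <;> simp
      _ = ∑ k, ∑ j, (if μ k = -μ j then
            (starRingEnd ℂ) (Λ k) * Complex.exp (Complex.I * (μ j : ℂ) * t) else 0) :=
          Finset.sum_comm
      _ = ∑ k, ∑ j, (if μ j = -μ k then
            (starRingEnd ℂ) (Λ k) * Complex.exp (Complex.I * ((-μ k : ℝ) : ℂ) * t) else 0) := by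
          refine Finset.sum_congr rfl fun k _ => Finset.sum_congr rfl fun j _ => ?_
          by_cases hc : μ j = -μ k
          · have hc' : μ k = -μ j := by linarith
            rw [if_pos hc', if_pos hc, hc]
          · rw [if_neg (fun hh => hc (by linarith)), if_neg hc]
      _ = ∑ k, (∑ j, if μ j = -μ k then (1 : ℂ) else 0) *
            ((starRingEnd ℂ) (Λ k) * Complex.exp (Complex.I * ((-μ k : ℝ) : ℂ) * t)) := by
          refine Finset.sum_congr rfl fun k _ => ?_
          rw [Finset.sum_mul]
          exact Finset.sum_congr rfl fun j _ => by split <;> simp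
      _ = ∑ k, (starRingEnd ℂ) (Λ k) * Complex.exp (Complex.I * ((-μ k : ℝ) : ℂ) * t) := by
          refine Finset.sum_congr rfl fun k _ => ?_
          by_cases hex : ∃ j, μ j = -μ k
          · obtain ⟨j₁, hj₁⟩ := hex
            have hone : (∑ j, if μ j = -μ k then (1 : ℂ) else 0) = 1 := by
              have hiff : ∀ j : Fin N, (μ j = -μ k) ↔ (j = j₁) := fun j =>
                ⟨fun hh => hμ (hh.trans hj₁.symm), fun hh => by rw [hh]; exact hj₁⟩
              simp only [hiff]
              simp
            rw [hone, one_mul]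
          · have hzero : Λ k = 0 := by
              rw [R k]
              exact Finset.sum_eq_zero fun j _ => if_neg (fun hh => hex ⟨j, hh⟩)
            simp [hzero]
  have hfix : (starRingEnd ℂ) (g t) = g t := by rw [hconj t, key]
  have := Complex.conj_eq_iff_im.mp hfix
  exact this
end

section
/- Let N ≥ 1, let μ_1, …, μ_N be pairwise distinct nonzero real numbers and let Λ_1, …, Λ_N be complex numbers such that Im(Σ_{j=1}^N Λ_j e^{i μ_j t}) ≥ 0 for every real t ≥ 0. Then for every index j: if there is an index k with μ_k = −μ_j, then Λ_j equals the complex conjugate of Λ_k; and if −μ_j does not belong to {μ_1, …, μ_N}, then Λ_j = 0. In particular, if μ_j + μ_k ≠ 0 for all j, k, then Λ_j = 0 for every j. -/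
open Complex Filter intervalIntegral Finset

noncomputable def cE (α t : ℝ) : ℂ := Complex.exp (Complex.I * α * t)

lemma cE_cont (α : ℝ) : Continuous (fun t => cE α t) := by
  unfold cE
  exact Complex.continuous_exp.comp ((continuous_const.mul Complex.continuous_ofReal))

lemma cE_intble (α : ℝ) (c : ℂ) (T : ℝ) :
    IntervalIntegrable (fun t => c * cE α t) MeasureTheory.volume 0 T :=
  (continuous_const.mul (cE_cont α)).intervalIntegrable 0 T

lemma meanExp (α : ℝ) :
    Tendsto (fun T : ℝ => (T : ℂ)⁻¹ * ∫ t in (0:ℝ)..T, cE α t)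
      atTop (nhds (if α = 0 then 1 else 0)) := by
  rcases eq_or_ne α 0 with hα | hα
  · rw [if_pos hα]
    apply Tendsto.congr' (f₁ := fun _ => (1:ℂ))
    · filter_upwards [eventually_gt_atTop (0:ℝ)] with T hT
      have : (fun t : ℝ => cE α t) = fun _ => (1:ℂ) := by
        funext t; simp [cE, hα]
      rw [this, intervalIntegral.integral_const]
      simp [Complex.ofReal_ne_zero.mpr hT.ne', inv_mul_cancel₀]
    · exact tendsto_const_nhds
  · rw [if_neg hα]
    have hc : (Complex.I * α) ≠ 0 := by
      simp [Complex.I_ne_zero, Complex.ofReal_eq_zero, hα]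
    have hint : ∀ T : ℝ, (∫ t in (0:ℝ)..T, cE α t)
        = (Complex.exp (Complex.I * α * T) - 1) / (Complex.I * α) := by
      intro T
      have : (fun t : ℝ => cE α t) = fun t : ℝ => Complex.exp ((Complex.I * α) * t) := by
        funext t; rfl
      rw [this, integral_exp_mul_complex hc]
      simp
    apply squeeze_zero_norm (a := fun T => (2 / ‖Complex.I * (α:ℂ)‖) * |T|⁻¹)
    · intro T
      rw [hint]
      rw [norm_mul, norm_div]
      have h1 : ‖(T:ℂ)⁻¹‖ = |T|⁻¹ := by
        rw [norm_inv, Complex.norm_real, Real.norm_eq_abs]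
      have h2 : ‖Complex.exp (Complex.I * α * T) - 1‖ ≤ 2 := by
        calc ‖Complex.exp (Complex.I * α * T) - 1‖
            ≤ ‖Complex.exp (Complex.I * α * T)‖ + ‖(1:ℂ)‖ := norm_sub_le _ _
          _ ≤ 2 := by
              have : Complex.I * α * T = ((α * T : ℝ) : ℂ) * Complex.I := by push_cast; ring
              rw [this, Complex.norm_exp_ofReal_mul_I]
              norm_num
      rw [h1]
      rw [mul_comm]
      gcongr
    · have : Tendsto (fun T : ℝ => |T|⁻¹) atTop (nhds 0) :=
        (tendsto_inv_atTop_zero).comp (tendsto_abs_atTop_atTop)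
      simpa using this.const_mul (2 / ‖Complex.I * (α:ℂ)‖)

lemma cE_mul (α β t : ℝ) : cE α t * cE β t = cE (α + β) t := by
  unfold cE; rw [← Complex.exp_add]; congr 1; push_cast; ring

lemma cE_conj (α t : ℝ) : (starRingEnd ℂ) (cE α t) = cE (-α) t := by
  unfold cE; rw [← Complex.exp_conj]; congr 1
  simp [Complex.conj_I]


lemma imCast (z : ℂ) : ((z.im : ℝ) : ℂ) = -(Complex.I/2) * (z - (starRingEnd ℂ) z) := by
  rw [Complex.sub_conj]
  push_cast
  ring_nf
  rw [Complex.I_sq]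
  ring

lemma im_le_zero_all (d : ℂ)
    (hθ : ∀ θ : ℝ, (d * Complex.exp (-(Complex.I * θ))).im ≤ 0) : d = 0 := by
  have key : ∀ θ : ℝ, d.re * (-Real.sin θ) + d.im * Real.cos θ ≤ 0 := by
    intro θ
    have he : -(Complex.I * (θ:ℂ)) = ((-θ : ℝ) : ℂ) * Complex.I := by push_cast; ring
    have h1 := hθ θ
    rw [Complex.mul_im, he, Complex.exp_ofReal_mul_I_re, Complex.exp_ofReal_mul_I_im,
      Real.cos_neg, Real.sin_neg] at h1
    linarith
  have k0 := key 0
  have kpi := key Real.pi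
  have kh := key (Real.pi / 2)
  have kmh := key (-(Real.pi / 2))
  simp [Real.sin_pi, Real.cos_pi, Real.sin_pi_div_two, Real.cos_pi_div_two] at k0 kpi kh kmh
  exact Complex.ext (le_antisymm kmh kh) (le_antisymm k0 kpi)

set_option maxHeartbeats 1000000 in
lemma core (N : ℕ) (μ : Fin N → ℝ) (hμ : Function.Injective μ) (hμ0 : ∀ j, μ j ≠ 0)
    (Λ : Fin N → ℂ)
    (h : ∀ t : ℝ, 0 ≤ t → 0 ≤ (∑ j, Λ j * cE (μ j) t).im)
    (j₀ : Fin N) (θ : ℝ) :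
    ((Λ j₀ - ∑ k ∈ Finset.univ.filter (fun k => μ k = -μ j₀), (starRingEnd ℂ) (Λ k)) *
      Complex.exp (-(Complex.I * θ))).im ≤ 0 := by
  classical
  set ν := μ j₀ with hν
  set eθ := Complex.exp (Complex.I * θ) with heθ
  set emθ := Complex.exp (-(Complex.I * θ)) with hemθ
  set fr : Fin N → Fin 6 → ℝ :=
    fun j => ![μ j, μ j + ν, μ j - ν, -μ j, ν - μ j, -μ j - ν] with hfr
  set co : Fin N → Fin 6 → ℂ :=
    fun j => ![-(Complex.I/2) * Λ j, (Complex.I/2) * (eθ/2) * Λ j,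
      (Complex.I/2) * (emθ/2) * Λ j, (Complex.I/2) * (starRingEnd ℂ) (Λ j),
      -(Complex.I/2) * (eθ/2) * (starRingEnd ℂ) (Λ j),
      -(Complex.I/2) * (emθ/2) * (starRingEnd ℂ) (Λ j)] with hco
  set f : ℝ → ℝ :=
    fun t => (∑ j, Λ j * cE (μ j) t).im * (1 - Real.cos (ν * t + θ)) with hf
  -- pointwise identity
  have hcos : ∀ t : ℝ, Complex.cos ((ν : ℂ) * t + θ)
      = (eθ * cE ν t + emθ * cE (-ν) t) / 2 := by
    intro t
    rw [show Complex.cos ((ν : ℂ) * t + θ)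
        = (Complex.exp (((ν:ℂ)*t+θ) * Complex.I) + Complex.exp (-((ν:ℂ)*t+θ) * Complex.I)) / 2
      from rfl]
    rw [show (((ν:ℂ)*t+θ) * Complex.I) = Complex.I * θ + Complex.I * ν * t by push_cast; ring,
      show (-((ν:ℂ)*t+θ) * Complex.I) = -(Complex.I * θ) + Complex.I * ((-ν : ℝ) : ℂ) * t by
        push_cast; ring,
      Complex.exp_add, Complex.exp_add]
    rfl
  have hpt : ∀ t : ℝ, ((f t : ℝ) : ℂ) = ∑ j, ∑ i, co j i * cE (fr j i) t := by
    intro t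
    have hconj : (starRingEnd ℂ) (∑ j, Λ j * cE (μ j) t)
        = ∑ j, (starRingEnd ℂ) (Λ j) * cE (-μ j) t := by
      rw [map_sum]
      exact Finset.sum_congr rfl fun j _ => by rw [map_mul, cE_conj]
    rw [hf]
    rw [Complex.ofReal_mul, Complex.ofReal_sub, Complex.ofReal_one, Complex.ofReal_cos]
    push_cast
    rw [imCast, hconj, hcos t, ← Finset.sum_sub_distrib, Finset.mul_sum, Finset.sum_mul]
    refine Finset.sum_congr rfl fun j _ => ?_
    have e1 : cE (μ j + ν) t = cE (μ j) t * cE ν t := (cE_mul _ _ t).symm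
    have e2 : cE (μ j - ν) t = cE (μ j) t * cE (-ν) t := by rw [cE_mul]; congr 1
    have e3 : cE (ν - μ j) t = cE (-μ j) t * cE ν t := by rw [cE_mul]; congr 1; ring
    have e4 : cE (-μ j - ν) t = cE (-μ j) t * cE (-ν) t := by rw [cE_mul]; congr 1
    simp only [hco, hfr, Fin.sum_univ_six, Matrix.cons_val_zero, Matrix.cons_val_one,
      Matrix.head_cons, Matrix.cons_val_two, Matrix.cons_val_three, Matrix.cons_val_four,
      Matrix.tail_cons, show ((5:Fin 6)) = Fin.succ 4 from rfl, Matrix.cons_val_succ]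
    rw [e1, e2, e3, e4]
    ring
  -- nonnegativity of averages
  have hf_cont : Continuous f := by
    apply Continuous.mul
    · exact Complex.continuous_im.comp
        (continuous_finset_sum _ fun j _ => continuous_const.mul (cE_cont (μ j)))
    · exact continuous_const.sub (Real.continuous_cos.comp (by continuity))
  have hint_nonneg : ∀ T : ℝ, 0 ≤ T → 0 ≤ ∫ t in (0:ℝ)..T, f t := by
    intro T hT
    apply intervalIntegral.integral_nonneg hT
    intro t ht
    have h2 : 0 ≤ 1 - Real.cos (ν * t + θ) := by
      have := Real.cos_le_one (ν * t + θ); linarith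
    exact mul_nonneg (h t ht.1) h2
  set L : ℂ := ∑ j, ∑ i, co j i * (if fr j i = 0 then 1 else 0) with hL
  have hA : Tendsto (fun T : ℝ => (T:ℂ)⁻¹ * ((∫ t in (0:ℝ)..T, f t : ℝ) : ℂ))
      atTop (nhds L) := by
    have heq : ∀ T : ℝ, (T:ℂ)⁻¹ * ((∫ t in (0:ℝ)..T, f t : ℝ) : ℂ)
        = ∑ j, ∑ i, co j i * ((T:ℂ)⁻¹ * ∫ t in (0:ℝ)..T, cE (fr j i) t) := by
      intro T
      rw [← intervalIntegral.integral_ofReal,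
        intervalIntegral.integral_congr (g := fun t => ∑ j, ∑ i, co j i * cE (fr j i) t)
          (fun t _ => hpt t),
        intervalIntegral.integral_finset_sum (f := fun j t => ∑ i, co j i * cE (fr j i) t)
          (fun j _ => (continuous_finset_sum _ fun i _ =>
            continuous_const.mul (cE_cont _)).intervalIntegrable 0 T)]
      rw [Finset.mul_sum]
      refine Finset.sum_congr rfl fun j _ => ?_
      rw [intervalIntegral.integral_finset_sum (fun i _ => cE_intble (fr j i) (co j i) T),
        Finset.mul_sum]
      refine Finset.sum_congr rfl fun i _ => ?_
      rw [intervalIntegral.integral_const_mul]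
      ring
    refine Tendsto.congr (fun T => (heq T).symm) ?_
    exact tendsto_finset_sum _ fun j _ => tendsto_finset_sum _ fun i _ =>
      ((meanExp (fr j i)).const_mul (co j i))
  have h2 : Tendsto (fun T : ℝ => (T:ℝ)⁻¹ * ∫ t in (0:ℝ)..T, f t) atTop (nhds L.re) := by
    have hc := (Complex.continuous_re.tendsto L).comp hA
    refine hc.congr fun T => ?_
    rw [Function.comp_apply, ← Complex.ofReal_inv, ← Complex.ofReal_mul, Complex.ofReal_re]
  have h0 : 0 ≤ L.re := by
    refine ge_of_tendsto h2 ?_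
    filter_upwards [eventually_ge_atTop (0:ℝ)] with T hT
    exact mul_nonneg (inv_nonneg.mpr hT) (hint_nonneg T hT)
  -- compute L
  have hterm : ∀ j, (∑ i, co j i * (if fr j i = 0 then 1 else 0))
      = (if μ j = -ν then
          (Complex.I/4) * (eθ * Λ j - emθ * (starRingEnd ℂ) (Λ j)) else 0)
        + (if j = j₀ then
          (Complex.I/4) * (emθ * Λ j - eθ * (starRingEnd ℂ) (Λ j)) else 0) := by
    intro j
    have c0 : ¬ (μ j = 0) := hμ0 j
    have c3 : ¬ (-μ j = 0) := by simpa using hμ0 j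
    have c1 : (μ j + ν = 0) = (μ j = -ν) := by
      rw [eq_iff_iff]; constructor <;> intro h' <;> linarith
    have c5 : (-μ j - ν = 0) = (μ j = -ν) := by
      rw [eq_iff_iff]; constructor <;> intro h' <;> linarith
    have c2 : (μ j - ν = 0) = (j = j₀) := by
      rw [eq_iff_iff, sub_eq_zero]; exact ⟨fun h' => hμ h', fun h' => by rw [h']⟩
    have c4 : (ν - μ j = 0) = (j = j₀) := by
      rw [eq_iff_iff, sub_eq_zero]
      exact ⟨fun h' => hμ h'.symm, fun h' => by rw [h']⟩
    simp only [hco, hfr, Fin.sum_univ_six, Matrix.cons_val_zero, Matrix.cons_val_one,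
      Matrix.head_cons, Matrix.cons_val_two, Matrix.cons_val_three, Matrix.cons_val_four,
      Matrix.tail_cons, show ((5:Fin 6)) = Fin.succ 4 from rfl, Matrix.cons_val_succ,
      c1, c2, c4, c5, if_neg c0, if_neg c3]
    rcases eq_or_ne j j₀ with hj2 | hj2
    · have hj1 : ¬ (μ j = -ν) := by
        rw [hj2, hν]; intro hc; exact hμ0 j₀ (by linarith)
      simp only [if_neg hj1, if_pos hj2, c0, ↓reduceIte]
      ring
    · rcases eq_or_ne (μ j) (-ν) with hj1 | hj1
      · simp only [if_pos hj1, if_neg hj2, c0, ↓reduceIte]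
        ring
      · simp only [if_neg hj1, if_neg hj2, c0, ↓reduceIte]
        ring
  set s' := ∑ k ∈ Finset.univ.filter (fun k => μ k = -ν), (starRingEnd ℂ) (Λ k) with hs'
  have hLval : L = (Complex.I/4) *
        (eθ * ((starRingEnd ℂ) s') - emθ * s')
      + (Complex.I/4) * (emθ * Λ j₀ - eθ * (starRingEnd ℂ) (Λ j₀)) := by
    have hs : ∑ k ∈ Finset.univ.filter (fun k => μ k = -ν), Λ k = (starRingEnd ℂ) s' := by
      rw [hs', map_sum]
      exact Finset.sum_congr rfl fun k _ => (Complex.conj_conj _).symm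
    rw [hL, Finset.sum_congr rfl (fun j _ => hterm j), Finset.sum_add_distrib]
    congr 1
    · rw [← Finset.sum_filter, ← hs]
      rw [Finset.mul_sum, Finset.mul_sum, ← Finset.sum_sub_distrib, Finset.mul_sum]
    · rw [Finset.sum_ite_eq' Finset.univ j₀]
      simp
  have hconj_emθ : (starRingEnd ℂ) emθ = eθ := by
    rw [hemθ, heθ, ← Complex.exp_conj]
    congr 1
    simp [Complex.conj_I]
  set w := (Λ j₀ - s') * emθ with hw
  have hLw : L = -((w.im : ℝ) : ℂ)/2 := by
    rw [hLval, imCast, hw, map_mul, map_sub, hconj_emθ]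
    ring
  rw [hLw] at h0
  rw [show -((w.im : ℝ) : ℂ)/2 = (((-w.im/2 : ℝ)) : ℂ) by push_cast; ring,
    Complex.ofReal_re] at h0
  linarith

/-- Coefficient identification for a finite exponential sum with pairwise distinct
nonzero real frequencies whose imaginary part is nonnegative on the half-line:
frequencies paired by `μ_k = -μ_j` force `Λ_j = conj Λ_k`, unpaired frequencies force
`Λ_j = 0`; in particular if no two frequencies sum to zero all coefficients vanish. -/
theorem stmt_3 (N : ℕ) (hN : 1 ≤ N) (μ : Fin N → ℝ) (hμ : Function.Injective μ)
    (hμ0 : ∀ j, μ j ≠ 0) (Λ : Fin N → ℂ)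
    (h : ∀ t : ℝ, 0 ≤ t →
      0 ≤ (∑ j, Λ j * Complex.exp (Complex.I * (μ j : ℂ) * (t : ℂ))).im) :
    (∀ j k, μ k = -μ j → Λ j = starRingEnd ℂ (Λ k)) ∧
    (∀ j, (¬ ∃ k, μ k = -μ j) → Λ j = 0) ∧
    ((∀ j k, μ j + μ k ≠ 0) → ∀ j, Λ j = 0) := by
  classical
  have h' : ∀ t : ℝ, 0 ≤ t → 0 ≤ (∑ j, Λ j * cE (μ j) t).im := by
    intro t ht; simpa [cE] using h t ht
  have key : ∀ j : Fin N,
      Λ j - ∑ k ∈ Finset.univ.filter (fun k => μ k = -μ j), (starRingEnd ℂ) (Λ k) = 0 := by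
    intro j
    exact im_le_zero_all _ (fun θ => core N μ hμ hμ0 Λ h' j θ)
  have part2 : ∀ j, (¬ ∃ k, μ k = -μ j) → Λ j = 0 := by
    intro j hj
    have hfil : Finset.univ.filter (fun k' => μ k' = -μ j) = ∅ := by
      ext k'
      simp only [Finset.mem_filter, Finset.mem_univ, true_and, Finset.notMem_empty, iff_false]
      exact fun h'' => hj ⟨k', h''⟩
    have := key j
    rwa [hfil, Finset.sum_empty, sub_zero] at this
  refine ⟨?_, part2, ?_⟩
  · intro j k hk
    have hfil : Finset.univ.filter (fun k' => μ k' = -μ j) = {k} := by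
      ext k'
      simp only [Finset.mem_filter, Finset.mem_univ, true_and, Finset.mem_singleton]
      exact ⟨fun h'' => hμ (h''.trans hk.symm), fun h'' => by rw [h'']; exact hk⟩
    have := key j
    rw [hfil, Finset.sum_singleton] at this
    exact sub_eq_zero.mp this
  · intro hsum j
    refine part2 j ?_
    rintro ⟨k, hk⟩
    exact hsum j k (by rw [hk]; ring)
end

section
/- Let X be a real Banach space, T > 0, and let F : ℝ × X → X be continuous, T-periodic in its first argument, and continuously (Fréchet) differentiable in its second argument with jointly continuous derivative D_z F. Define F⁰(z) := (1/T) ∫_0^T F(τ, z) dτ and U(θ, z) := ∫_0^θ (F(τ, z) − F⁰(z)) dτ. Let s < L, let v : [s, L] → X be continuously differentiable, and let ε > 0. Then for every t ∈ [s, L]: ∫_s^t (F(τ/ε, v(τ)) − F⁰(v(τ))) dτ = ε U(t/ε, v(t)) − ε U(s/ε, v(s)) − ε ∫_s^t D_z U(τ/ε, v(τ))(v'(τ)) dτ, where D_z U(θ, z) is the Fréchet derivative of U(θ, ·) at z. -/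
set_option maxHeartbeats 1000000
set_option synthInstance.maxHeartbeats 400000

open MeasureTheory intervalIntegral Set Asymptotics Metric Filter

section aux
variable {X : Type*} [NormedAddCommGroup X] [NormedSpace ℝ X] [CompleteSpace X]

/-- Joint differentiability from a continuous first-variable partial derivative plus
a second-variable Fréchet derivative at the point. -/
lemma avg_joint_hasFDerivAt {g g' : ℝ → X → X} {Dg : X →L[ℝ] X} {a : ℝ} {x : X}
    (hg' : ∀ z θ, HasDerivAt (fun θ => g θ z) (g' θ z) θ)
    (hg'c : Continuous fun p : ℝ × X => g' p.1 p.2)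
    (hDg : HasFDerivAt (g a) Dg x) :
    HasFDerivAt (fun p : ℝ × X => g p.1 p.2)
      ((ContinuousLinearMap.fst ℝ ℝ X).smulRight (g' a x)
        + Dg.comp (ContinuousLinearMap.snd ℝ ℝ X)) (a, x) := by
  have hcont : ∀ y : X, Continuous fun u => g' u y := fun y =>
    hg'c.comp (continuous_id.prodMk continuous_const)
  have key : ∀ (b : ℝ) (y : X), g b y - g a y = ∫ u in a..b, g' u y := fun b y =>
    (intervalIntegral.integral_eq_sub_of_hasDerivAt (fun u _ => hg' y u)
      ((hcont y).intervalIntegrable a b)).symm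
  have h2 : (fun p : ℝ × X => g a p.2 - g a x - Dg (p.2 - x)) =o[nhds (a, x)]
      fun p : ℝ × X => p - (a, x) := by
    have := (hDg.comp ((a, x) : ℝ × X) (hasFDerivAt_snd (𝕜 := ℝ) (p := ((a, x) : ℝ × X)))).isLittleO
    simpa using this
  have h1 : (fun p : ℝ × X => ∫ u in a..p.1, (g' u p.2 - g' a x)) =o[nhds (a, x)]
      fun p : ℝ × X => p - (a, x) := by
    rw [isLittleO_iff]
    intro c hc
    obtain ⟨r, hr, hball⟩ := Metric.continuousAt_iff.1 hg'c.continuousAt c hc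
    filter_upwards [Metric.ball_mem_nhds (a, x) hr] with p hp
    have hble : dist p.1 a ≤ dist p (a, x) := by
      rw [Prod.dist_eq]; exact le_max_left _ _
    have hyle : dist p.2 x ≤ dist p (a, x) := by
      rw [Prod.dist_eq]; exact le_max_right _ _
    have hbound : ∀ u ∈ Set.uIoc a p.1, ‖g' u p.2 - g' a x‖ ≤ c := by
      intro u hu
      have h3 := le_abs_self (p.1 - a)
      have h4 := neg_abs_le (p.1 - a)
      have habs : |u - a| ≤ |p.1 - a| := by
        rw [abs_sub_le_iff]
        rcases Set.mem_uIoc.1 hu with ⟨hu1, hu2⟩ | ⟨hu1, hu2⟩ <;>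
          constructor <;> linarith
      have hdist : dist ((u, p.2) : ℝ × X) (a, x) < r := by
        rw [Prod.dist_eq, max_lt_iff]
        refine ⟨?_, lt_of_le_of_lt hyle hp⟩
        · rw [Real.dist_eq]
          calc |u - a| ≤ |p.1 - a| := habs
            _ = dist p.1 a := (Real.dist_eq _ _).symm
            _ ≤ dist p (a, x) := hble
            _ < r := hp
      have := hball hdist
      rw [dist_eq_norm] at this
      exact this.le
    calc ‖∫ u in a..p.1, (g' u p.2 - g' a x)‖ ≤ c * |p.1 - a| :=
          intervalIntegral.norm_integral_le_of_norm_le_const hbound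
      _ ≤ c * ‖p - (a, x)‖ := by
          apply mul_le_mul_of_nonneg_left _ hc.le
          calc |p.1 - a| = ‖(p - (a, x)).1‖ := rfl
            _ ≤ ‖p - (a, x)‖ := norm_fst_le _
  refine HasFDerivAt.of_isLittleO ?_
  refine (h1.add h2).congr' (Filter.Eventually.of_forall fun p => ?_)
    (Filter.Eventually.of_forall fun _ => rfl)
  simp only [Pi.add_apply, ContinuousLinearMap.add_apply,
    ContinuousLinearMap.smulRight_apply, ContinuousLinearMap.coe_fst',
    ContinuousLinearMap.coe_comp', ContinuousLinearMap.coe_snd',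
    Function.comp_apply, Prod.fst_sub, Prod.snd_sub]
  rw [intervalIntegral.integral_sub ((hcont p.2).intervalIntegrable a p.1)
    (intervalIntegrable_const), intervalIntegral.integral_const, ← key]
  abel

/-- Differentiation under the interval integral for a `C¹` integrand. -/
lemma avg_param_deriv {F : ℝ → X → X} {DF : ℝ → X → (X →L[ℝ] X)}
    (hFcont : Continuous fun p : ℝ × X => F p.1 p.2)
    (hDF : ∀ θ z, HasFDerivAt (F θ) (DF θ z) z)
    (hDFcont : Continuous fun p : ℝ × X => DF p.1 p.2)
    (a b : ℝ) (z : X) :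
    HasFDerivAt (fun x => ∫ u in a..b, F u x) (∫ u in a..b, DF u z) z := by
  have hKc : IsCompact ((Set.uIcc a b) ×ˢ ({z} : Set X)) :=
    isCompact_uIcc.prod isCompact_singleton
  obtain ⟨C, hC⟩ := hKc.exists_bound_of_continuousOn hDFcont.continuousOn
  have hV : IsOpen {p : ℝ × X | ‖DF p.1 p.2‖ < C + 1} :=
    isOpen_lt (by fun_prop) continuous_const
  have hKV : (Set.uIcc a b) ×ˢ ({z} : Set X) ⊆ {p : ℝ × X | ‖DF p.1 p.2‖ < C + 1} :=
    fun p hp => lt_of_le_of_lt (hC p hp) (lt_add_one C)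
  obtain ⟨δ, hδ, hth⟩ := hKc.exists_thickening_subset_open hV hKV
  have hF_c : ∀ x : X, Continuous fun u : ℝ => F u x := fun x =>
    hFcont.comp (continuous_id.prodMk continuous_const)
  have hDF_c : Continuous fun u : ℝ => DF u z :=
    hDFcont.comp (continuous_id.prodMk continuous_const)
  apply intervalIntegral.hasFDerivAt_integral_of_dominated_of_fderiv_le
    (F' := fun x u => DF u x) (bound := fun _ => C + 1) (Metric.ball_mem_nhds z hδ)
    (Filter.Eventually.of_forall fun x => (hF_c x).aestronglyMeasurable)
    ((hF_c z).intervalIntegrable a b)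
    hDF_c.aestronglyMeasurable ?_
    intervalIntegrable_const
    (Filter.Eventually.of_forall fun u _ x _ => hDF u x)
  refine Filter.Eventually.of_forall fun u hu x hx => ?_
  have hmem : ((u, x) : ℝ × X) ∈ Metric.thickening δ ((Set.uIcc a b) ×ˢ ({z} : Set X)) := by
    rw [Metric.mem_thickening_iff]
    refine ⟨(u, z), Set.mk_mem_prod (Set.Ioc_subset_Icc_self hu) rfl, ?_⟩
    rw [Prod.dist_eq, dist_self]
    simpa [max_eq_right dist_nonneg] using hx
  exact le_of_lt (hth hmem)

end aux

/-- Integration-by-parts identity of the averaging method (Hale–Lunel): for `F`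
continuous, `T`-periodic in its first argument and `C¹` in its second argument, with
averaged field `F⁰` and zero-mean primitive `U`, and for any `C¹` curve `v` on `[s,L]`,
`∫_s^t (F(τ/ε, v(τ)) − F⁰(v(τ))) dτ
  = ε U(t/ε, v(t)) − ε U(s/ε, v(s)) − ε ∫_s^t D_z U(τ/ε, v(τ))(v'(τ)) dτ`. -/
theorem stmt_7 {X : Type*} [NormedAddCommGroup X] [NormedSpace ℝ X] [CompleteSpace X]
    (T : ℝ) (hT : 0 < T)
    (F : ℝ → X → X) (DF : ℝ → X → (X →L[ℝ] X))
    (hFcont : Continuous (fun p : ℝ × X => F p.1 p.2))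
    (hper : ∀ z, Function.Periodic (fun θ => F θ z) T)
    (hDF : ∀ θ z, HasFDerivAt (F θ) (DF θ z) z)
    (hDFcont : Continuous (fun p : ℝ × X => DF p.1 p.2))
    (F0 : X → X) (hF0 : ∀ z, F0 z = (1 / T) • ∫ τ in (0:ℝ)..T, F τ z)
    (U : ℝ → X → X) (hU : ∀ θ z, U θ z = ∫ τ in (0:ℝ)..θ, (F τ z - F0 z))
    (DU : ℝ → X → (X →L[ℝ] X)) (hDU : ∀ θ z, HasFDerivAt (U θ) (DU θ z) z)
    (s L : ℝ) (hsL : s < L)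
    (v v' : ℝ → X) (hv : ∀ t ∈ Set.Icc s L, HasDerivAt v (v' t) t)
    (hv' : ContinuousOn v' (Set.Icc s L))
    (ε : ℝ) (hε : 0 < ε) :
    ∀ t ∈ Set.Icc s L,
      (∫ τ in s..t, (F (τ / ε) (v τ) - F0 (v τ)))
        = ε • U (t / ε) (v t) - ε • U (s / ε) (v s)
          - ε • ∫ τ in s..t, DU (τ / ε) (v τ) (v' τ) := by
  intro t ht
  have hF0cont : Continuous F0 := by
    have h2 : Continuous fun z : X => ∫ u in (0:ℝ)..T, F u z := by
      apply intervalIntegral.continuous_parametric_intervalIntegral_of_continuous'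
        (f := fun (z : X) (u : ℝ) => F u z)
      exact hFcont.comp continuous_swap
    have e : F0 = fun z => (1 / T) • ∫ τ in (0:ℝ)..T, F τ z := funext hF0
    rw [e]; exact h2.const_smul _
  -- derivative of F0
  have hF0deriv : ∀ z, HasFDerivAt F0 ((1/T : ℝ) • ∫ u in (0:ℝ)..T, DF u z) z := by
    intro z
    have := (avg_param_deriv hFcont hDF hDFcont 0 T z).const_smul (1/T : ℝ)
    have e : F0 = fun z => (1 / T) • ∫ τ in (0:ℝ)..T, F τ z := funext hF0
    rw [e]; exact this
  -- formula for DU by uniqueness of derivatives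
  have hDUeq : ∀ θ z, DU θ z
      = (∫ u in (0:ℝ)..θ, DF u z) - θ • ((1/T : ℝ) • ∫ u in (0:ℝ)..T, DF u z) := by
    intro θ z
    refine (hDU θ z).unique ?_
    have e : U θ = fun z => (∫ u in (0:ℝ)..θ, F u z) - θ • F0 z := by
      funext y
      have hci : Continuous fun u : ℝ => F u y := by
        exact hFcont.comp (continuous_id.prodMk continuous_const)
      rw [hU θ y, intervalIntegral.integral_sub (hci.intervalIntegrable 0 θ)
        intervalIntegrable_const, intervalIntegral.integral_const]
      simp
    rw [e]
    exact (avg_param_deriv hFcont hDF hDFcont 0 θ z).sub ((hF0deriv z).const_smul θ)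
  -- continuity of DU
  have hDUcont : Continuous fun p : ℝ × X => DU p.1 p.2 := by
    have h0 : Continuous fun p : X × ℝ => ∫ u in (0:ℝ)..p.2, DF u p.1 := by
      apply continuous_parametric_primitive_of_continuous (f := fun (z : X) (u : ℝ) => DF u z)
      exact hDFcont.comp continuous_swap
    have h1 : Continuous fun p : ℝ × X => ∫ u in (0:ℝ)..p.1, DF u p.2 :=
      h0.comp₂ continuous_snd continuous_fst
    have h2 : Continuous fun z : X => ∫ u in (0:ℝ)..T, DF u z := by
      apply intervalIntegral.continuous_parametric_intervalIntegral_of_continuous'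
        (f := fun (z : X) (u : ℝ) => DF u z)
      exact hDFcont.comp continuous_swap
    have e : (fun p : ℝ × X => DU p.1 p.2)
        = fun p => (∫ u in (0:ℝ)..p.1, DF u p.2)
            - p.1 • ((1/T : ℝ) • ∫ u in (0:ℝ)..T, DF u p.2) :=
      funext fun p => hDUeq p.1 p.2
    rw [e]
    exact h1.sub (continuous_fst.smul ((h2.comp continuous_snd).const_smul (1/T : ℝ) :
      Continuous fun p : ℝ × X => (1/T : ℝ) • ∫ u in (0:ℝ)..T, DF u p.2))
  -- derivative of τ ↦ ε • U (τ/ε) (v τ)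
  have hUderiv : ∀ τ ∈ Set.Icc s L, HasDerivAt (fun τ => ε • U (τ/ε) (v τ))
      ((F (τ/ε) (v τ) - F0 (v τ)) + ε • DU (τ/ε) (v τ) (v' τ)) τ := by
    intro τ hτ
    have hjoint : HasFDerivAt (fun p : ℝ × X => U p.1 p.2)
        ((ContinuousLinearMap.fst ℝ ℝ X).smulRight (F (τ/ε) (v τ) - F0 (v τ))
          + (DU (τ/ε) (v τ)).comp (ContinuousLinearMap.snd ℝ ℝ X)) (τ/ε, v τ) := by
      refine avg_joint_hasFDerivAt (g' := fun θ z => F θ z - F0 z) ?_ ?_ (hDU _ _)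
      · intro z θ
        have e : (fun θ => U θ z) = fun θ => ∫ u in (0:ℝ)..θ, (F u z - F0 z) :=
          funext fun θ => hU θ z
        rw [e]
        have hfz : Continuous fun u : ℝ => F u z - F0 z := by
          exact (hFcont.comp (continuous_id.prodMk continuous_const)).sub continuous_const
        exact (hfz.integral_hasStrictDerivAt 0 θ).hasDerivAt
      · exact hFcont.sub (hF0cont.comp continuous_snd)
    have hcurve : HasDerivAt (fun τ : ℝ => ((τ/ε : ℝ), v τ)) ((1/ε : ℝ), v' τ) τ := by
      have h1 : HasDerivAt (fun τ : ℝ => τ/ε) (1/ε : ℝ) τ := by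
        simpa using (hasDerivAt_id τ).div_const ε
      exact h1.prodMk (hv τ hτ)
    have hcomp := hjoint.comp_hasDerivAt τ hcurve
    have h2 := hcomp.const_smul ε
    convert h2 using 1
    · rfl
    simp only [ContinuousLinearMap.add_apply, ContinuousLinearMap.smulRight_apply,
      ContinuousLinearMap.coe_fst', ContinuousLinearMap.coe_comp',
      ContinuousLinearMap.coe_snd', Function.comp_apply]
    rw [smul_add, smul_smul, mul_one_div_cancel hε.ne', one_smul]
  -- integrability
  have hts : s ≤ t := ht.1
  have hsub : Set.uIcc s t ⊆ Set.Icc s L := by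
    rw [Set.uIcc_of_le hts]; exact Set.Icc_subset_Icc le_rfl ht.2
  have hvcont : ContinuousOn v (Set.Icc s L) := fun τ hτ =>
    (hv τ hτ).continuousAt.continuousWithinAt
  have hcurvecont : ContinuousOn (fun τ : ℝ => ((τ/ε : ℝ), v τ)) (Set.Icc s L) :=
    ((continuous_id.div_const ε).continuousOn).prodMk hvcont
  have hFterm : ContinuousOn (fun τ => F (τ/ε) (v τ) - F0 (v τ)) (Set.Icc s L) :=
    (hFcont.comp_continuousOn hcurvecont).sub (hF0cont.comp_continuousOn hvcont)
  have hDUterm : ContinuousOn (fun τ => DU (τ/ε) (v τ) (v' τ)) (Set.Icc s L) :=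
    (hDUcont.comp_continuousOn hcurvecont).clm_apply hv'
  have hint1 : IntervalIntegrable (fun τ => F (τ/ε) (v τ) - F0 (v τ)) volume s t :=
    (hFterm.mono hsub).intervalIntegrable
  have hint2 : IntervalIntegrable (fun τ => DU (τ/ε) (v τ) (v' τ)) volume s t :=
    (hDUterm.mono hsub).intervalIntegrable
  have hint2' : IntervalIntegrable (fun τ => ε • DU (τ/ε) (v τ) (v' τ)) volume s t := by
    exact hint2.smul ε
  have key := intervalIntegral.integral_eq_sub_of_hasDerivAt
    (f' := fun τ => (F (τ/ε) (v τ) - F0 (v τ)) + ε • DU (τ/ε) (v τ) (v' τ))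
    (fun τ hτ => hUderiv τ (hsub hτ)) (hint1.add hint2')
  rw [intervalIntegral.integral_add hint1 hint2',
    intervalIntegral.integral_smul] at key
  rw [eq_sub_iff_add_eq]
  exact key
end

section
/- Let X be a real Banach space, T > 0, and let F : ℝ × X → X be continuous, T-periodic in its first argument, and continuously (Fréchet) differentiable in its second argument with jointly continuous derivative D_z F. Define F⁰(z) := (1/T) ∫_0^T F(τ, z) dτ. Let s < L and let v : [s, L] → X be continuously differentiable. Suppose there are constants M₂, M₄ ≥ 0 with ‖F(θ, v(t))‖ ≤ M₂ and ‖D_z F(θ, v(t))(v'(t))‖ ≤ M₄ for all θ ∈ ℝ and t ∈ [s, L]. Then for every ε > 0 and every t ∈ [s, L]: ‖∫_s^t (F(τ/ε, v(τ)) − F⁰(v(τ))) dτ‖ ≤ ε T (4 M₂ + 2 M₄ (L − s)). -/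
open MeasureTheory Set intervalIntegral

/-- Quantitative `O(ε)` estimate of the averaging method: under uniform bounds `M₂` on
`F` and `M₄` on `D_z F(·, v(·))(v'(·))` along a `C¹` curve `v` on `[s,L]`, the oscillatory
integral satisfies `‖∫_s^t (F(τ/ε, v(τ)) − F⁰(v(τ))) dτ‖ ≤ εT(4M₂ + 2M₄(L−s))`. -/
theorem stmt_8 {X : Type*} [NormedAddCommGroup X] [NormedSpace ℝ X] [CompleteSpace X]
    (T : ℝ) (hT : 0 < T)
    (F : ℝ → X → X) (DF : ℝ → X → (X →L[ℝ] X))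
    (hFcont : Continuous (fun p : ℝ × X => F p.1 p.2))
    (hper : ∀ z, Function.Periodic (fun θ => F θ z) T)
    (hDF : ∀ θ z, HasFDerivAt (F θ) (DF θ z) z)
    (hDFcont : Continuous (fun p : ℝ × X => DF p.1 p.2))
    (F0 : X → X) (hF0 : ∀ z, F0 z = (1 / T) • ∫ τ in (0:ℝ)..T, F τ z)
    (s L : ℝ) (hsL : s < L)
    (v v' : ℝ → X) (hv : ∀ t ∈ Set.Icc s L, HasDerivAt v (v' t) t)
    (hv' : ContinuousOn v' (Set.Icc s L))
    (M₂ M₄ : ℝ) (hM₂ : 0 ≤ M₂) (hM₄ : 0 ≤ M₄)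
    (hbF : ∀ θ : ℝ, ∀ t ∈ Set.Icc s L, ‖F θ (v t)‖ ≤ M₂)
    (hbDF : ∀ θ : ℝ, ∀ t ∈ Set.Icc s L, ‖DF θ (v t) (v' t)‖ ≤ M₄) :
    ∀ ε : ℝ, 0 < ε → ∀ t ∈ Set.Icc s L,
      ‖∫ τ in s..t, (F (τ / ε) (v τ) - F0 (v τ))‖
        ≤ ε * T * (4 * M₂ + 2 * M₄ * (L - s)) := by
  have hsLle : s ≤ L := hsL.le
  have hcv : ContinuousOn v (Set.Icc s L) := fun x hx =>
    ((hv x hx).continuousAt).continuousWithinAt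
  -- Lipschitz estimate for `F θ` along the curve
  have hlipF : ∀ θ : ℝ, ∀ a ∈ Set.Icc s L, ∀ b ∈ Set.Icc s L,
      ‖F θ (v b) - F θ (v a)‖ ≤ M₄ * |b - a| := by
    intro θ a ha b hb
    have hsub : Set.uIcc a b ⊆ Set.Icc s L := by
      rw [← Set.uIcc_of_le hsLle]
      exact Set.uIcc_subset_uIcc (by rwa [Set.uIcc_of_le hsLle])
        (by rwa [Set.uIcc_of_le hsLle])
    have hder : ∀ τ ∈ Set.uIcc a b,
        HasDerivAt (fun τ => F θ (v τ)) (DF θ (v τ) (v' τ)) τ := by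
      intro τ hτ
      exact (hDF θ (v τ)).comp_hasDerivAt τ (hv τ (hsub hτ))
    have hcont : ContinuousOn (fun τ => DF θ (v τ) (v' τ)) (Set.uIcc a b) := by
      apply ContinuousOn.clm_apply
      · have : ContinuousOn (fun τ : ℝ => ((θ, v τ) : ℝ × X)) (Set.uIcc a b) :=
          continuousOn_const.prodMk (hcv.mono hsub)
        exact hDFcont.comp_continuousOn this
      · exact hv'.mono hsub
    have hint : IntervalIntegrable (fun τ => DF θ (v τ) (v' τ)) volume a b :=
      hcont.intervalIntegrable
    have heq := intervalIntegral.integral_eq_sub_of_hasDerivAt hder hint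
    rw [← heq]
    apply intervalIntegral.norm_integral_le_of_norm_le_const
    intro x hx
    exact hbDF θ x (hsub (Set.uIoc_subset_uIcc hx))
  -- integrability of `τ ↦ F τ z`
  have hintF : ∀ z : X, ∀ a b : ℝ, IntervalIntegrable (fun τ => F τ z) volume a b := by
    intro z a b
    have : Continuous (fun τ : ℝ => F τ z) :=
      hFcont.comp (continuous_id.prodMk continuous_const)
    exact this.intervalIntegrable a b
  -- bound on `F0` along the curve
  have hF0norm : ∀ u ∈ Set.Icc s L, ‖F0 (v u)‖ ≤ M₂ := by
    intro u hu
    rw [hF0, norm_smul]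
    have h1 : ‖∫ τ in (0:ℝ)..T, F τ (v u)‖ ≤ M₂ * |T - 0| :=
      intervalIntegral.norm_integral_le_of_norm_le_const (fun x _ => hbF x u hu)
    rw [sub_zero, abs_of_pos hT] at h1
    have h2 : ‖(1 / T : ℝ)‖ = 1 / T := by
      rw [Real.norm_eq_abs, abs_of_pos (by positivity)]
    rw [h2]
    calc (1 / T) * ‖∫ τ in (0:ℝ)..T, F τ (v u)‖ ≤ (1 / T) * (M₂ * T) := by
          apply mul_le_mul_of_nonneg_left h1 (by positivity)
      _ = M₂ := by field_simp
  -- Lipschitz estimate for `F0` along the curve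
  have hF0lip : ∀ a ∈ Set.Icc s L, ∀ b ∈ Set.Icc s L,
      ‖F0 (v b) - F0 (v a)‖ ≤ M₄ * |b - a| := by
    intro a ha b hb
    rw [hF0, hF0, ← smul_sub,
      ← intervalIntegral.integral_sub (hintF (v b) 0 T) (hintF (v a) 0 T), norm_smul]
    have h1 : ‖∫ τ in (0:ℝ)..T, (F τ (v b) - F τ (v a))‖ ≤ (M₄ * |b - a|) * |T - 0| :=
      intervalIntegral.norm_integral_le_of_norm_le_const (fun x _ => hlipF x a ha b hb)
    rw [sub_zero, abs_of_pos hT] at h1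
    have h2 : ‖(1 / T : ℝ)‖ = 1 / T := by
      rw [Real.norm_eq_abs, abs_of_pos (by positivity)]
    rw [h2]
    calc (1 / T) * ‖∫ τ in (0:ℝ)..T, (F τ (v b) - F τ (v a))‖
        ≤ (1 / T) * ((M₄ * |b - a|) * T) := by
          apply mul_le_mul_of_nonneg_left h1 (by positivity)
      _ = M₄ * |b - a| := by field_simp
  -- zero mean of the oscillation over one period
  have hzero : ∀ z : X, ∀ c : ℝ, (∫ σ in c..(c + T), (F σ z - F0 z)) = 0 := by
    intro z c
    have hper' : Function.Periodic (fun θ => F θ z - F0 z) T := by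
      intro x
      have h : F (x + T) z = F x z := hper z x
      simp only [h]
    rw [hper'.intervalIntegral_add_eq c 0, zero_add,
      intervalIntegral.integral_sub (hintF z 0 T) intervalIntegrable_const,
      intervalIntegral.integral_const, hF0, sub_zero, smul_smul, mul_one_div,
      div_self hT.ne', one_smul, sub_self]
  -- main argument
  intro ε hε t ht
  obtain ⟨hst, htL⟩ := ht
  set P : ℝ := ε * T with hPdef
  have hP : 0 < P := by positivity
  set N : ℕ := ⌊(t - s) / P⌋₊ with hNdef
  have hts : 0 ≤ t - s := by linarith
  have hN1 : (N : ℝ) * P ≤ t - s := by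
    have h := Nat.floor_le (show (0:ℝ) ≤ (t - s) / P by positivity)
    calc (N : ℝ) * P ≤ ((t - s) / P) * P :=
          mul_le_mul_of_nonneg_right h hP.le
      _ = t - s := div_mul_cancel₀ _ hP.ne'
  have hN2 : t - s < ((N : ℝ) + 1) * P := by
    have h := Nat.lt_floor_add_one ((t - s) / P)
    calc t - s = ((t - s) / P) * P := (div_mul_cancel₀ _ hP.ne').symm
      _ < ((N : ℝ) + 1) * P := by
          apply mul_lt_mul_of_pos_right _ hP
          exact_mod_cast h
  set a : ℕ → ℝ := fun k => s + k * P with hadef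
  have haval : ∀ k : ℕ, a k = s + k * P := fun k => rfl
  have hasucc : ∀ k : ℕ, a (k + 1) = a k + P := by
    intro k; simp only [haval]; push_cast; ring
  have haIcc : ∀ k : ℕ, k ≤ N → a k ∈ Set.Icc s L := by
    intro k hk
    have hk' : (k : ℝ) * P ≤ (N : ℝ) * P := by
      apply mul_le_mul_of_nonneg_right _ hP.le
      exact_mod_cast hk
    constructor
    · rw [haval]; nlinarith [hP.le]
    · rw [haval]; nlinarith [hN1, hk']
  have hamono : ∀ k : ℕ, a k ≤ a (k + 1) := by
    intro k; rw [hasucc]; linarith [hP.le]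
  set f : ℝ → X := fun τ => F (τ / ε) (v τ) - F0 (v τ) with hfdef
  -- continuity and integrability of the integrand
  have hf0v : ContinuousOn (fun τ => F0 (v τ)) (Set.Icc s L) := by
    have hl : LipschitzOnWith (Real.toNNReal M₄) (fun τ => F0 (v τ)) (Set.Icc s L) := by
      rw [lipschitzOnWith_iff_dist_le_mul]
      intro x hx y hy
      rw [dist_eq_norm, dist_eq_norm]
      calc ‖F0 (v x) - F0 (v y)‖ ≤ M₄ * |x - y| := hF0lip y hy x hx
        _ = (Real.toNNReal M₄ : ℝ) * ‖x - y‖ := by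
            rw [Real.coe_toNNReal M₄ hM₄, Real.norm_eq_abs]
    exact hl.continuousOn
  have hfc : ContinuousOn f (Set.Icc s L) := by
    apply ContinuousOn.sub _ hf0v
    have : ContinuousOn (fun τ : ℝ => ((τ / ε, v τ) : ℝ × X)) (Set.Icc s L) :=
      (continuous_id.div_const ε).continuousOn.prodMk hcv
    exact hFcont.comp_continuousOn this
  have hfint : ∀ c ∈ Set.Icc s L, ∀ d ∈ Set.Icc s L, IntervalIntegrable f volume c d := by
    intro c hc d hd
    apply ContinuousOn.intervalIntegrable
    apply hfc.mono
    rw [← Set.uIcc_of_le hsLle]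
    exact Set.uIcc_subset_uIcc (by rwa [Set.uIcc_of_le hsLle])
      (by rwa [Set.uIcc_of_le hsLle])
  -- the frozen oscillation integrates to zero over a period of length `P`
  have hzeroP : ∀ z : X, ∀ c : ℝ, (∫ τ in c..(c + P), (F (τ / ε) z - F0 z)) = 0 := by
    intro z c
    have h1 : (∫ τ in c..(c + P), (F (τ / ε) z - F0 z))
        = ε • ∫ σ in (c / ε)..((c + P) / ε), (F σ z - F0 z) :=
      intervalIntegral.integral_comp_div (fun σ => F σ z - F0 z) hε.ne'
    have h2 : (c + P) / ε = c / ε + T := by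
      field_simp [hPdef]
      ring
    rw [h1, h2, hzero z (c / ε), smul_zero]
  -- integrability of the frozen oscillation
  have hgint : ∀ z : X, ∀ c d : ℝ,
      IntervalIntegrable (fun τ => F (τ / ε) z - F0 z) volume c d := by
    intro z c d
    have : Continuous (fun τ : ℝ => F (τ / ε) z - F0 z) :=
      (hFcont.comp ((continuous_id.div_const ε).prodMk continuous_const)).sub
        continuous_const
    exact this.intervalIntegrable c d
  -- estimate on each full period
  have hterm : ∀ k : ℕ, k < N → ‖∫ τ in (a k)..(a (k + 1)), f τ‖ ≤ 2 * M₄ * P * P := by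
    intro k hk
    have hak : a k ∈ Set.Icc s L := haIcc k hk.le
    have hak1 : a (k + 1) ∈ Set.Icc s L := haIcc (k + 1) hk
    have hzk : (∫ τ in (a k)..(a (k + 1)), (F (τ / ε) (v (a k)) - F0 (v (a k)))) = 0 := by
      rw [hasucc k]; exact hzeroP (v (a k)) (a k)
    have hsplit : (∫ τ in (a k)..(a (k + 1)), f τ)
        = ∫ τ in (a k)..(a (k + 1)), (f τ - (F (τ / ε) (v (a k)) - F0 (v (a k)))) := by
      rw [intervalIntegral.integral_sub (hfint _ hak _ hak1) (hgint (v (a k)) _ _), hzk,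
        sub_zero]
    rw [hsplit]
    have hb : ‖∫ τ in (a k)..(a (k + 1)),
        (f τ - (F (τ / ε) (v (a k)) - F0 (v (a k))))‖
        ≤ (2 * M₄ * P) * |a (k + 1) - a k| := by
      apply intervalIntegral.norm_integral_le_of_norm_le_const
      intro x hx
      rw [Set.uIoc_of_le (hamono k)] at hx
      obtain ⟨hx1, hx2⟩ := hx
      have hxI : x ∈ Set.Icc s L := ⟨le_trans hak.1 hx1.le, le_trans hx2 hak1.2⟩
      have e1 : f x - (F (x / ε) (v (a k)) - F0 (v (a k)))
          = (F (x / ε) (v x) - F (x / ε) (v (a k))) - (F0 (v x) - F0 (v (a k))) := by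
        simp only [hfdef]; abel
      rw [e1]
      have b1 := hlipF (x / ε) (a k) hak x hxI
      have b2 := hF0lip (a k) hak x hxI
      have hxd : |x - a k| ≤ P := by
        rw [abs_of_nonneg (by linarith)]
        have := hasucc k
        linarith
      calc ‖(F (x / ε) (v x) - F (x / ε) (v (a k))) - (F0 (v x) - F0 (v (a k)))‖
          ≤ ‖F (x / ε) (v x) - F (x / ε) (v (a k))‖ + ‖F0 (v x) - F0 (v (a k))‖ :=
            norm_sub_le _ _
        _ ≤ M₄ * |x - a k| + M₄ * |x - a k| := add_le_add b1 b2
        _ ≤ 2 * M₄ * P := by nlinarith [abs_nonneg (x - a k)]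
    have habs : |a (k + 1) - a k| = P := by
      rw [hasucc k]; rw [add_sub_cancel_left]; exact abs_of_pos hP
    rw [habs] at hb
    exact hb
  -- sum over full periods
  have hsumN : ‖∫ τ in (a 0)..(a N), f τ‖ ≤ (N : ℝ) * (2 * M₄ * P * P) := by
    rw [← intervalIntegral.sum_integral_adjacent_intervals
      (fun k hk => hfint _ (haIcc k hk.le) _ (haIcc (k + 1) hk))]
    calc ‖∑ k ∈ Finset.range N, ∫ τ in (a k)..(a (k + 1)), f τ‖
        ≤ ∑ k ∈ Finset.range N, ‖∫ τ in (a k)..(a (k + 1)), f τ‖ := norm_sum_le _ _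
      _ ≤ ∑ _k ∈ Finset.range N, (2 * M₄ * P * P) :=
          Finset.sum_le_sum (fun k hk => hterm k (Finset.mem_range.mp hk))
      _ = (N : ℝ) * (2 * M₄ * P * P) := by
          rw [Finset.sum_const, Finset.card_range, nsmul_eq_mul]
  -- remainder estimate
  have haN : a N ∈ Set.Icc s L := haIcc N le_rfl
  have haNt : a N ≤ t := by rw [haval]; linarith [hN1]
  have hrem : ‖∫ τ in (a N)..t, f τ‖ ≤ (2 * M₂) * P := by
    have hb : ‖∫ τ in (a N)..t, f τ‖ ≤ (2 * M₂) * |t - a N| := by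
      apply intervalIntegral.norm_integral_le_of_norm_le_const
      intro x hx
      rw [Set.uIoc_of_le haNt] at hx
      have hxI : x ∈ Set.Icc s L := ⟨le_trans haN.1 hx.1.le, le_trans hx.2 htL⟩
      calc ‖f x‖ ≤ ‖F (x / ε) (v x)‖ + ‖F0 (v x)‖ := norm_sub_le _ _
        _ ≤ M₂ + M₂ := add_le_add (hbF _ x hxI) (hF0norm x hxI)
        _ = 2 * M₂ := by ring
    have hd : |t - a N| ≤ P := by
      rw [abs_of_nonneg (by linarith)]
      rw [haval] at *
      linarith [hN2]
    calc ‖∫ τ in (a N)..t, f τ‖ ≤ (2 * M₂) * |t - a N| := hb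
      _ ≤ (2 * M₂) * P := by
          apply mul_le_mul_of_nonneg_left hd (by positivity)
  -- combine
  have ha0 : a 0 = s := by rw [haval]; push_cast; ring
  have hsplit2 : (∫ τ in s..t, f τ)
      = (∫ τ in (a 0)..(a N), f τ) + ∫ τ in (a N)..t, f τ := by
    rw [ha0]
    exact (intervalIntegral.integral_add_adjacent_intervals
      (hfint s ⟨le_rfl, hsLle⟩ _ haN) (hfint _ haN t ⟨hst, htL⟩)).symm
  have hfinal : ‖∫ τ in s..t, f τ‖ ≤ (N : ℝ) * (2 * M₄ * P * P) + (2 * M₂) * P := by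
    rw [hsplit2]
    exact le_trans (norm_add_le _ _) (add_le_add hsumN hrem)
  have hNP : (N : ℝ) * (2 * M₄ * P * P) ≤ 2 * M₄ * P * (L - s) := by
    have h1 : (N : ℝ) * P ≤ L - s := by linarith [hN1]
    nlinarith [hP.le, mul_nonneg hM₄ hP.le]
  calc ‖∫ τ in s..t, f τ‖ ≤ (N : ℝ) * (2 * M₄ * P * P) + (2 * M₂) * P := hfinal
    _ ≤ 2 * M₄ * P * (L - s) + (2 * M₂) * P := by linarith
    _ ≤ ε * T * (4 * M₂ + 2 * M₄ * (L - s)) := by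
        rw [hPdef] at *
        nlinarith [hP.le, mul_nonneg hM₂ hP.le]
end

section
/- Let X be a complex Banach space, let B₁, B₂ : X → X be continuous linear maps, let s < L be reals, let a, b : ℝ → ℝ be continuously differentiable, and let ψ⁰ ∈ X. For ε > 0 set u_ε(t) := a(t) + b(t) sin(t/ε), and let ψ_ε, ψ_av : [s, L] → X be differentiable functions satisfying ψ_ε(s) = ψ_av(s) = ψ⁰ and, for all t ∈ [s, L], ψ_ε'(t) = −i (u_ε(t) B₁ ψ_ε(t) + u_ε(t)² B₂ ψ_ε(t)) and ψ_av'(t) = −i (a(t) B₁ ψ_av(t) + (a(t)² + b(t)²/2) B₂ ψ_av(t)). Then there exists a constant C > 0, depending only on ‖B₁‖, ‖B₂‖, the suprema of |a|, |b|, |a'|, |b'| on [s, L], L − s, and ‖ψ⁰‖, such that for every ε > 0 and every t ∈ [s, L], ‖ψ_ε(t) − ψ_av(t)‖ ≤ C ε. -/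
open Set intervalIntegral MeasureTheory

set_option maxHeartbeats 1000000 in
/-- Integration-by-parts estimate for oscillatory integrals. -/
lemma osc_est {X : Type*} [NormedAddCommGroup X] [NormedSpace ℝ X] [CompleteSpace X]
    (p p' : ℝ → X) (s t ω Q P : ℝ) (hst : s ≤ t) (hω : 0 < ω)
    (hp : ∀ τ ∈ Set.Icc s t, HasDerivAt p (p' τ) τ)
    (hp' : ContinuousOn p' (Set.Icc s t))
    (hQ : ∀ τ ∈ Set.Icc s t, ‖p' τ‖ ≤ Q) (hP : ∀ τ ∈ Set.Icc s t, ‖p τ‖ ≤ P)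
    (c Cc : ℝ → ℝ) (hder : ∀ x, HasDerivAt Cc (c x) x) (hCc : ∀ x, |Cc x| ≤ 1)
    (hcont : Continuous c) :
    ‖∫ τ in s..t, c (ω * τ) • p τ‖ ≤ (1/ω) * (2*P + Q*(t-s)) := by
  have hPnn : 0 ≤ P := le_trans (norm_nonneg _) (hP s ⟨le_refl s, hst⟩)
  have hQnn : 0 ≤ Q := le_trans (norm_nonneg _) (hQ s ⟨le_refl s, hst⟩)
  have hpc : ContinuousOn p (Set.Icc s t) :=
    fun τ hτ => (hp τ hτ).continuousAt.continuousWithinAt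
  have hCcont : Continuous Cc :=
    continuous_iff_continuousAt.2 fun x => (hder x).continuousAt
  -- the scalar factor and its derivative
  have hscal : ∀ τ : ℝ, HasDerivAt (fun τ => ω⁻¹ * Cc (ω * τ)) (c (ω * τ)) τ := by
    intro τ
    have h1 : HasDerivAt (fun τ : ℝ => Cc (ω * τ)) (c (ω * τ) * ω) τ := by
      have := (hder (ω * τ)).comp τ ((hasDerivAt_id τ).const_mul ω)
      exact this.congr_deriv (by ring)
    have := h1.const_mul ω⁻¹
    exact this.congr_deriv (by field_simp)
  -- the primitive
  set G : ℝ → X := fun τ => (ω⁻¹ * Cc (ω * τ)) • p τ with hG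
  have hGder : ∀ τ ∈ Set.Icc s t, HasDerivAt G
      (c (ω * τ) • p τ + (ω⁻¹ * Cc (ω * τ)) • p' τ) τ := by
    intro τ hτ
    have := (hscal τ).smul (hp τ hτ)
    rw [add_comm] at this
    exact this
  -- integrability
  have hcont1 : ContinuousOn (fun τ => c (ω * τ) • p τ) (Set.Icc s t) :=
    ((hcont.comp (continuous_const.mul continuous_id)).continuousOn).smul hpc
  have hcont2 : ContinuousOn (fun τ => (ω⁻¹ * Cc (ω * τ)) • p' τ) (Set.Icc s t) :=
    ((continuous_const.mul (hCcont.comp (continuous_const.mul continuous_id))).continuousOn).smul hp'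
  have hi1 : IntervalIntegrable (fun τ => c (ω * τ) • p τ) volume s t :=
    (hcont1.mono (by rw [Set.uIcc_of_le hst])).intervalIntegrable
  have hi2 : IntervalIntegrable (fun τ => (ω⁻¹ * Cc (ω * τ)) • p' τ) volume s t :=
    (hcont2.mono (by rw [Set.uIcc_of_le hst])).intervalIntegrable
  -- FTC
  have hftc : ∫ τ in s..t, (c (ω * τ) • p τ + (ω⁻¹ * Cc (ω * τ)) • p' τ) = G t - G s := by
    apply intervalIntegral.integral_eq_sub_of_hasDerivAt
    · intro τ hτ
      exact hGder τ (by rwa [Set.uIcc_of_le hst] at hτ)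
    · exact hi1.add hi2
  have hsplit : ∫ τ in s..t, c (ω * τ) • p τ
      = (G t - G s) - ∫ τ in s..t, (ω⁻¹ * Cc (ω * τ)) • p' τ := by
    rw [← hftc, intervalIntegral.integral_add hi1 hi2]; abel
  rw [hsplit]
  have hGbound : ∀ τ ∈ Set.Icc s t, ‖G τ‖ ≤ ω⁻¹ * P := by
    intro τ hτ
    rw [hG]
    simp only [norm_smul, Real.norm_eq_abs, abs_mul, abs_inv, abs_of_pos hω]
    calc ω⁻¹ * |Cc (ω * τ)| * ‖p τ‖ ≤ ω⁻¹ * 1 * P := by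
          apply mul_le_mul _ (hP τ hτ) (norm_nonneg _)
            (by positivity)
          apply mul_le_mul_of_nonneg_left (hCc _) (by positivity)
      _ = ω⁻¹ * P := by ring
  have hIbound : ‖∫ τ in s..t, (ω⁻¹ * Cc (ω * τ)) • p' τ‖ ≤ ω⁻¹ * Q * (t - s) := by
    have := intervalIntegral.norm_integral_le_of_norm_le_const
      (f := fun τ => (ω⁻¹ * Cc (ω * τ)) • p' τ) (C := ω⁻¹ * Q) (a := s) (b := t) ?_
    · calc ‖∫ τ in s..t, (ω⁻¹ * Cc (ω * τ)) • p' τ‖ ≤ ω⁻¹ * Q * |t - s| := this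
        _ = ω⁻¹ * Q * (t - s) := by rw [abs_of_nonneg (by linarith)]
    · intro x hx
      rw [Set.uIoc_of_le hst] at hx
      have hx' : x ∈ Set.Icc s t := ⟨le_of_lt hx.1, hx.2⟩
      rw [norm_smul, Real.norm_eq_abs, abs_mul, abs_inv, abs_of_pos hω]
      calc ω⁻¹ * |Cc (ω * x)| * ‖p' x‖ ≤ ω⁻¹ * 1 * Q := by
            apply mul_le_mul _ (hQ x hx') (norm_nonneg _) (by positivity)
            apply mul_le_mul_of_nonneg_left (hCc _) (by positivity)
        _ = ω⁻¹ * Q := by ring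
  calc ‖G t - G s - ∫ τ in s..t, (ω⁻¹ * Cc (ω * τ)) • p' τ‖
      ≤ ‖G t - G s‖ + ‖∫ τ in s..t, (ω⁻¹ * Cc (ω * τ)) • p' τ‖ := norm_sub_le _ _
    _ ≤ (‖G t‖ + ‖G s‖) + ω⁻¹ * Q * (t - s) := by
        gcongr
        exact norm_sub_le _ _
    _ ≤ (ω⁻¹ * P + ω⁻¹ * P) + ω⁻¹ * Q * (t - s) := by
        gcongr
        exacts [hGbound t ⟨hst, le_refl t⟩, hGbound s ⟨le_refl s, hst⟩]
    _ = (1/ω) * (2*P + Q*(t-s)) := by field_simp; ring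

set_option maxHeartbeats 2000000 in
/-- Averaging approximation property for the bilinear control system with dipolar and
polarizability couplings: the solution driven by the highly oscillating control
`u_ε(t) = a(t) + b(t) sin(t/ε)` stays `O(ε)`-close, uniformly on `[s, L]`, to the
solution of the averaged system in which `u` is replaced by `a` and `u²` by
`a² + b²/2`. -/
theorem stmt_11 {X : Type*} [NormedAddCommGroup X] [NormedSpace ℂ X] [CompleteSpace X]
    (B₁ B₂ : X →L[ℂ] X) (s L : ℝ) (hsL : s < L)
    (a b a' b' : ℝ → ℝ)
    (ha : ∀ t, HasDerivAt a (a' t) t) (hb : ∀ t, HasDerivAt b (b' t) t)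
    (ha' : Continuous a') (hb' : Continuous b')
    (ψ0 : X) (ψav : ℝ → X) (ψ : ℝ → ℝ → X)
    (hψavs : ψav s = ψ0)
    (hψav : ∀ t ∈ Set.Icc s L, HasDerivAt ψav
      ((-Complex.I) • (((a t : ℝ) : ℂ) • B₁ (ψav t)
        + (((a t ^ 2 + b t ^ 2 / 2 : ℝ)) : ℂ) • B₂ (ψav t))) t)
    (hψs : ∀ ε : ℝ, 0 < ε → ψ ε s = ψ0)
    (hψ : ∀ ε : ℝ, 0 < ε → ∀ t ∈ Set.Icc s L, HasDerivAt (ψ ε)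
      ((-Complex.I) • (((a t + b t * Real.sin (t / ε) : ℝ) : ℂ) • B₁ (ψ ε t)
        + ((((a t + b t * Real.sin (t / ε)) ^ 2 : ℝ)) : ℂ) • B₂ (ψ ε t))) t) :
    ∃ C > 0, ∀ ε : ℝ, 0 < ε → ∀ t ∈ Set.Icc s L, ‖ψ ε t - ψav t‖ ≤ C * ε := by
  have hsL' : s ≤ L := hsL.le
  have hmemS : s ∈ Set.Icc s L := ⟨le_refl s, hsL'⟩
  have hac : Continuous a := continuous_iff_continuousAt.2 fun x => (ha x).continuousAt
  have hbc : Continuous b := continuous_iff_continuousAt.2 fun x => (hb x).continuousAt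
  obtain ⟨Ma, hMa⟩ := (isCompact_Icc (a := s) (b := L)).exists_bound_of_continuousOn
    hac.continuousOn
  obtain ⟨Mb, hMb⟩ := (isCompact_Icc (a := s) (b := L)).exists_bound_of_continuousOn
    hbc.continuousOn
  obtain ⟨Ma', hMa'⟩ := (isCompact_Icc (a := s) (b := L)).exists_bound_of_continuousOn
    ha'.continuousOn
  obtain ⟨Mb', hMb'⟩ := (isCompact_Icc (a := s) (b := L)).exists_bound_of_continuousOn
    hb'.continuousOn
  have hMa0 : 0 ≤ Ma := le_trans (norm_nonneg _) (hMa s hmemS)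
  have hMb0 : 0 ≤ Mb := le_trans (norm_nonneg _) (hMb s hmemS)
  have hMa'0 : 0 ≤ Ma' := le_trans (norm_nonneg _) (hMa' s hmemS)
  have hMb'0 : 0 ≤ Mb' := le_trans (norm_nonneg _) (hMb' s hmemS)
  set M : ℝ := 1 + Ma + Mb + Ma' + Mb' + ‖B₁‖ + ‖B₂‖ + ‖ψ0‖ with hMdef
  have hM1 : 1 ≤ M := by
    have h1 := norm_nonneg B₁; have h2 := norm_nonneg B₂; have h3 := norm_nonneg ψ0
    rw [hMdef]; linarith
  have hM0 : 0 < M := lt_of_lt_of_le one_pos hM1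
  have haM : ∀ t ∈ Set.Icc s L, |a t| ≤ M := by
    intro t ht
    have h1 := norm_nonneg B₁; have h2 := norm_nonneg B₂; have h3 := norm_nonneg ψ0
    have := hMa t ht; rw [Real.norm_eq_abs] at this; rw [hMdef]; linarith
  have hbM : ∀ t ∈ Set.Icc s L, |b t| ≤ M := by
    intro t ht
    have h1 := norm_nonneg B₁; have h2 := norm_nonneg B₂; have h3 := norm_nonneg ψ0
    have := hMb t ht; rw [Real.norm_eq_abs] at this; rw [hMdef]; linarith
  have ha'M : ∀ t ∈ Set.Icc s L, |a' t| ≤ M := by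
    intro t ht
    have h1 := norm_nonneg B₁; have h2 := norm_nonneg B₂; have h3 := norm_nonneg ψ0
    have := hMa' t ht; rw [Real.norm_eq_abs] at this; rw [hMdef]; linarith
  have hb'M : ∀ t ∈ Set.Icc s L, |b' t| ≤ M := by
    intro t ht
    have h1 := norm_nonneg B₁; have h2 := norm_nonneg B₂; have h3 := norm_nonneg ψ0
    have := hMb' t ht; rw [Real.norm_eq_abs] at this; rw [hMdef]; linarith
  have hB₁M : ‖B₁‖ ≤ M := by
    have h2 := norm_nonneg B₂; have h3 := norm_nonneg ψ0; rw [hMdef]; linarith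
  have hB₂M : ‖B₂‖ ≤ M := by
    have h1 := norm_nonneg B₁; have h3 := norm_nonneg ψ0; rw [hMdef]; linarith
  have hψ0M : ‖ψ0‖ ≤ M := by
    have h1 := norm_nonneg B₁; have h2 := norm_nonneg B₂; rw [hMdef]; linarith
  clear_value M
  clear hMa hMb hMa' hMb' hMdef
  -- the constants
  set K : ℝ := 6 * M ^ 3 with hKdef
  have hK0 : 0 < K := by positivity
  set R : ℝ := M * Real.exp (K * (L - s)) with hRdef
  have hR0 : 0 < R := by positivity
  set D : ℝ := K * R with hDdef
  have hD0 : 0 < D := by positivity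
  clear_value K R D
  set P1 : ℝ := M * (M * R) + (2 * M * M) * (M * R) with hP1def
  set Q1 : ℝ := (M * (M * D) + M * (M * R))
    + ((2 * M * M) * (M * D) + (2 * M * M + 2 * M * M) * (M * R)) with hQ1def
  set P2 : ℝ := (M * M / 2) * (M * R) with hP2def
  set Q2 : ℝ := (M * M / 2) * (M * D) + (M * M) * (M * R) with hQ2def
  have hP10 : 0 ≤ P1 := by positivity
  have hQ10 : 0 ≤ Q1 := by positivity
  have hP20 : 0 ≤ P2 := by positivity
  have hQ20 : 0 ≤ Q2 := by positivity
  set Cf : ℝ := (2 * P1 + Q1 * (L - s)) + (2 * P2 + Q2 * (L - s)) with hCfdef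
  have hCf0 : 0 ≤ Cf := by
    have h1 : 0 ≤ L - s := by linarith
    have := mul_nonneg hQ10 h1; have := mul_nonneg hQ20 h1
    rw [hCfdef]; linarith
  clear_value P1 Q1 P2 Q2 Cf
  refine ⟨(Cf + 1) * (Real.exp (K * (L - s)) + 1), by positivity, ?_⟩
  intro ε hε
  -- rewrite the derivatives in real-scalar form
  have key : ∀ (r : ℝ) (x : X), (-Complex.I) • ((r : ℂ) • x) = r • ((-Complex.I) • x) := by
    intro r x; rw [smul_comm, Complex.coe_smul]
  set v₁ : ℝ → X := fun τ => (-Complex.I) • B₁ (ψ ε τ) with hv₁def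
  set v₂ : ℝ → X := fun τ => (-Complex.I) • B₂ (ψ ε τ) with hv₂def
  set w₁ : ℝ → X := fun τ => (-Complex.I) • B₁ (ψav τ) with hw₁def
  set w₂ : ℝ → X := fun τ => (-Complex.I) • B₂ (ψav τ) with hw₂def
  set u : ℝ → ℝ := fun τ => a τ + b τ * Real.sin (ε⁻¹ * τ) with hudef
  set dψ : ℝ → X := fun τ => u τ • v₁ τ + u τ ^ 2 • v₂ τ with hdψdef
  clear_value v₁ v₂ w₁ w₂ u dψ
  have hψ' : ∀ τ ∈ Set.Icc s L, HasDerivAt (ψ ε) (dψ τ) τ := by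
    intro τ hτ
    have h := hψ ε hε τ hτ
    simp only [div_eq_inv_mul] at h
    convert h using 1
    simp only [hdψdef, hudef, hv₁def, hv₂def]
    rw [smul_add, key, key]
  have hψav' : ∀ τ ∈ Set.Icc s L, HasDerivAt ψav
      (a τ • w₁ τ + (a τ ^ 2 + b τ ^ 2 / 2) • w₂ τ) τ := by
    intro τ hτ
    have h := hψav τ hτ
    convert h using 1
    simp only [hw₁def, hw₂def]
    rw [smul_add, key, key]
  -- uniform bound on ψ ε via Gronwall
  have hψc : ContinuousOn (ψ ε) (Set.Icc s L) :=
    fun τ hτ => (hψ' τ hτ).continuousAt.continuousWithinAt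
  have hv₁b : ∀ τ ∈ Set.Icc s L, ‖v₁ τ‖ ≤ M * ‖ψ ε τ‖ := by
    intro τ hτ
    rw [hv₁def]
    simp only [norm_smul, norm_neg, Complex.norm_I, one_mul]
    exact le_trans (B₁.le_opNorm _) (by gcongr)
  have hv₂b : ∀ τ ∈ Set.Icc s L, ‖v₂ τ‖ ≤ M * ‖ψ ε τ‖ := by
    intro τ hτ
    rw [hv₂def]
    simp only [norm_smul, norm_neg, Complex.norm_I, one_mul]
    exact le_trans (B₂.le_opNorm _) (by gcongr)
  have huB : ∀ τ ∈ Set.Icc s L, |u τ| ≤ 2 * M := by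
    intro τ hτ
    rw [hudef]
    calc |a τ + b τ * Real.sin (ε⁻¹ * τ)| ≤ |a τ| + |b τ| * |Real.sin (ε⁻¹ * τ)| := by
          rw [← abs_mul]; exact abs_add_le _ _
      _ ≤ M + M * 1 := add_le_add (haM τ hτ) (mul_le_mul (hbM τ hτ)
          (Real.abs_sin_le_one _) (abs_nonneg _) (le_trans (abs_nonneg _) (hbM τ hτ)))
      _ = 2 * M := by ring
  have hderb : ∀ τ ∈ Set.Icc s L, ‖dψ τ‖ ≤ K * ‖ψ ε τ‖ := by
    intro τ hτ
    have h1 := hv₁b τ hτ; have h2 := hv₂b τ hτ; have h3 := huB τ hτ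
    have h4 : -(2*M) ≤ u τ ∧ u τ ≤ 2*M := abs_le.mp h3
    have h5 : 0 ≤ ‖ψ ε τ‖ := norm_nonneg _
    simp only [hdψdef]
    calc ‖u τ • v₁ τ + u τ ^ 2 • v₂ τ‖ ≤ ‖u τ • v₁ τ‖ + ‖u τ ^ 2 • v₂ τ‖ := norm_add_le _ _
      _ = |u τ| * ‖v₁ τ‖ + u τ ^ 2 * ‖v₂ τ‖ := by
          simp only [norm_smul, Real.norm_eq_abs, abs_of_nonneg (sq_nonneg (u τ))]
      _ ≤ 2*M*(M*‖ψ ε τ‖) + 4*M^2*(M*‖ψ ε τ‖) := by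
          have hu2 : u τ ^ 2 ≤ 4 * M^2 := by nlinarith [h4.1, h4.2]
          exact add_le_add (mul_le_mul h3 h1 (norm_nonneg _) (by positivity))
            (mul_le_mul hu2 h2 (norm_nonneg _) (by positivity))
      _ ≤ K * ‖ψ ε τ‖ := by
          rw [hKdef]
          nlinarith [mul_nonneg (mul_nonneg h5 hM0.le) hM0.le, hM1]
  have hψb : ∀ τ ∈ Set.Icc s L, ‖ψ ε τ‖ ≤ R := by
    intro τ hτ
    have hgr := norm_le_gronwallBound_of_norm_deriv_right_le (f := ψ ε) (f' := dψ)
      (δ := M) (K := K) (ε := 0) (a := s) (b := L) hψc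
      (fun x hx => (hψ' x (Set.Ico_subset_Icc_self hx)).hasDerivWithinAt)
      (by rw [hψs ε hε]; exact hψ0M)
      (fun x hx => by rw [add_zero]; exact hderb x (Set.Ico_subset_Icc_self hx))
      τ hτ
    rw [gronwallBound_ε0] at hgr
    refine le_trans hgr ?_
    rw [hRdef]
    have h1 : K * (τ - s) ≤ K * (L - s) :=
      mul_le_mul_of_nonneg_left (by linarith [hτ.2]) hK0.le
    exact mul_le_mul_of_nonneg_left (Real.exp_le_exp.mpr h1) hM0.le
  have hdψb : ∀ τ ∈ Set.Icc s L, ‖dψ τ‖ ≤ D := by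
    intro τ hτ
    refine le_trans (hderb τ hτ) ?_
    rw [hDdef]
    exact mul_le_mul_of_nonneg_left (hψb τ hτ) hK0.le
  -- derivatives of v₁, v₂
  set v₁' : ℝ → X := fun τ => (-Complex.I) • B₁ (dψ τ) with hv₁'def
  set v₂' : ℝ → X := fun τ => (-Complex.I) • B₂ (dψ τ) with hv₂'def
  clear_value v₁' v₂'
  have hv₁d : ∀ τ ∈ Set.Icc s L, HasDerivAt v₁ (v₁' τ) τ := by
    intro τ hτ
    simp only [hv₁def, hv₁'def]
    have h0 : HasDerivAt (fun x => B₁ (ψ ε x)) (B₁ (dψ τ)) τ :=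
      (B₁.restrictScalars ℝ).hasFDerivAt.comp_hasDerivAt τ (hψ' τ hτ)
    exact h0.const_smul (-Complex.I)
  have hv₂d : ∀ τ ∈ Set.Icc s L, HasDerivAt v₂ (v₂' τ) τ := by
    intro τ hτ
    simp only [hv₂def, hv₂'def]
    have h0 : HasDerivAt (fun x => B₂ (ψ ε x)) (B₂ (dψ τ)) τ :=
      (B₂.restrictScalars ℝ).hasFDerivAt.comp_hasDerivAt τ (hψ' τ hτ)
    exact h0.const_smul (-Complex.I)
  have hv₁'b : ∀ τ ∈ Set.Icc s L, ‖v₁' τ‖ ≤ M * D := by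
    intro τ hτ
    rw [hv₁'def]
    simp only [norm_smul, norm_neg, Complex.norm_I, one_mul]
    exact le_trans (B₁.le_opNorm _)
      (mul_le_mul hB₁M (hdψb τ hτ) (norm_nonneg _) hM0.le)
  have hv₂'b : ∀ τ ∈ Set.Icc s L, ‖v₂' τ‖ ≤ M * D := by
    intro τ hτ
    rw [hv₂'def]
    simp only [norm_smul, norm_neg, Complex.norm_I, one_mul]
    exact le_trans (B₂.le_opNorm _)
      (mul_le_mul hB₂M (hdψb τ hτ) (norm_nonneg _) hM0.le)
  have hv₁Rb : ∀ τ ∈ Set.Icc s L, ‖v₁ τ‖ ≤ M * R := by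
    intro τ hτ
    exact le_trans (hv₁b τ hτ) (mul_le_mul_of_nonneg_left (hψb τ hτ) hM0.le)
  have hv₂Rb : ∀ τ ∈ Set.Icc s L, ‖v₂ τ‖ ≤ M * R := by
    intro τ hτ
    exact le_trans (hv₂b τ hτ) (mul_le_mul_of_nonneg_left (hψb τ hτ) hM0.le)
  -- continuity facts
  have huc : Continuous u := by
    rw [hudef]
    exact hac.add (hbc.mul (Real.continuous_sin.comp (continuous_const.mul continuous_id)))
  have hv₁c : ContinuousOn v₁ (Set.Icc s L) := by
    rw [hv₁def]; exact continuousOn_const.smul (B₁.continuous.comp_continuousOn hψc)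
  have hv₂c : ContinuousOn v₂ (Set.Icc s L) := by
    rw [hv₂def]; exact continuousOn_const.smul (B₂.continuous.comp_continuousOn hψc)
  have hdψc : ContinuousOn dψ (Set.Icc s L) := by
    rw [hdψdef]
    exact (huc.continuousOn.smul hv₁c).add (((huc.pow 2).continuousOn).smul hv₂c)
  have hv₁'c : ContinuousOn v₁' (Set.Icc s L) := by
    rw [hv₁'def]; exact continuousOn_const.smul (B₁.continuous.comp_continuousOn hdψc)
  have hv₂'c : ContinuousOn v₂' (Set.Icc s L) := by
    rw [hv₂'def]; exact continuousOn_const.smul (B₂.continuous.comp_continuousOn hdψc)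
  -- the oscillating parts
  set p₁ : ℝ → X := fun τ => b τ • v₁ τ + (2 * a τ * b τ) • v₂ τ with hp₁def
  set p₁' : ℝ → X := fun τ => (b τ • v₁' τ + b' τ • v₁ τ)
    + ((2 * a τ * b τ) • v₂' τ + (2 * a' τ * b τ + 2 * a τ * b' τ) • v₂ τ) with hp₁'def
  set p₂ : ℝ → X := fun τ => (-(b τ ^ 2 / 2)) • v₂ τ with hp₂def
  set p₂' : ℝ → X := fun τ => (-(b τ ^ 2 / 2)) • v₂' τ + (-(b τ * b' τ)) • v₂ τ with hp₂'def
  clear_value p₁ p₁' p₂ p₂'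
  have hp₁d : ∀ τ ∈ Set.Icc s L, HasDerivAt p₁ (p₁' τ) τ := by
    intro τ hτ
    simp only [hp₁def, hp₁'def]
    have h1 := (hb τ).smul (hv₁d τ hτ)
    have h2s : HasDerivAt (fun τ => 2 * a τ * b τ) (2 * a' τ * b τ + 2 * a τ * b' τ) τ := by
      have := (((ha τ).const_mul 2).mul (hb τ))
      refine this.congr_deriv (Eq.symm ?_)
      try ring
    exact h1.add (h2s.smul (hv₂d τ hτ))
  have hp₂d : ∀ τ ∈ Set.Icc s L, HasDerivAt p₂ (p₂' τ) τ := by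
    intro τ hτ
    simp only [hp₂def, hp₂'def]
    have hs2 : HasDerivAt (fun τ => -(b τ ^ 2 / 2)) (-(b τ * b' τ)) τ := by
      have h := (((hb τ).pow 2).div_const 2).neg
      exact h.congr_deriv (by rw [show (2:ℕ) - 1 = 1 from rfl]; push_cast; ring)
    exact hs2.smul (hv₂d τ hτ)
  have hp₁c : ContinuousOn p₁ (Set.Icc s L) := by
    rw [hp₁def]
    exact (hbc.continuousOn.smul hv₁c).add
      (((continuous_const.mul hac).mul hbc).continuousOn.smul hv₂c)
  have hp₁'c : ContinuousOn p₁' (Set.Icc s L) := by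
    rw [hp₁'def]
    apply ContinuousOn.add
    · exact (hbc.continuousOn.smul hv₁'c).add (hb'.continuousOn.smul hv₁c)
    · apply ContinuousOn.add
      · exact ((continuous_const.mul hac).mul hbc).continuousOn.smul hv₂'c
      · exact (((continuous_const.mul ha').mul hbc).add
          ((continuous_const.mul hac).mul hb')).continuousOn.smul hv₂c
  have hp₂c : ContinuousOn p₂ (Set.Icc s L) := by
    rw [hp₂def]
    exact ((hbc.pow 2).div_const 2).neg.continuousOn.smul hv₂c
  have hp₂'c : ContinuousOn p₂' (Set.Icc s L) := by
    rw [hp₂'def]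
    exact (((hbc.pow 2).div_const 2).neg.continuousOn.smul hv₂'c).add
      ((hbc.mul hb').neg.continuousOn.smul hv₂c)
  -- bounds for p₁, p₁', p₂, p₂'
  have habM : ∀ τ ∈ Set.Icc s L, |2 * a τ * b τ| ≤ 2 * M * M := by
    intro τ hτ
    rw [abs_mul, abs_mul, abs_two]
    exact mul_le_mul (mul_le_mul_of_nonneg_left (haM τ hτ) (by norm_num))
      (hbM τ hτ) (abs_nonneg _) (by positivity)
  have ha'bM : ∀ τ ∈ Set.Icc s L, |2 * a' τ * b τ| ≤ 2 * M * M := by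
    intro τ hτ
    rw [abs_mul, abs_mul, abs_two]
    exact mul_le_mul (mul_le_mul_of_nonneg_left (ha'M τ hτ) (by norm_num))
      (hbM τ hτ) (abs_nonneg _) (by positivity)
  have hab'M : ∀ τ ∈ Set.Icc s L, |2 * a τ * b' τ| ≤ 2 * M * M := by
    intro τ hτ
    rw [abs_mul, abs_mul, abs_two]
    exact mul_le_mul (mul_le_mul_of_nonneg_left (haM τ hτ) (by norm_num))
      (hb'M τ hτ) (abs_nonneg _) (by positivity)
  have hbsqM : ∀ τ ∈ Set.Icc s L, |(-(b τ ^ 2 / 2))| ≤ M * M / 2 := by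
    intro τ hτ
    rw [abs_neg, abs_div, abs_two]
    have h1 : |b τ ^ 2| = |b τ| * |b τ| := by rw [sq, abs_mul]
    rw [h1]
    have h2 : |b τ| * |b τ| ≤ M * M :=
      mul_le_mul (hbM τ hτ) (hbM τ hτ) (abs_nonneg _) hM0.le
    linarith
  have hbb'M : ∀ τ ∈ Set.Icc s L, |(-(b τ * b' τ))| ≤ M * M := by
    intro τ hτ
    rw [abs_neg, abs_mul]
    exact mul_le_mul (hbM τ hτ) (hb'M τ hτ) (abs_nonneg _) hM0.le
  have hp₁b : ∀ τ ∈ Set.Icc s L, ‖p₁ τ‖ ≤ P1 := by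
    intro τ hτ
    rw [hp₁def, hP1def]
    calc ‖b τ • v₁ τ + (2 * a τ * b τ) • v₂ τ‖
        ≤ ‖b τ • v₁ τ‖ + ‖(2 * a τ * b τ) • v₂ τ‖ := norm_add_le _ _
      _ ≤ M * (M * R) + (2 * M * M) * (M * R) := by
          rw [norm_smul, norm_smul, Real.norm_eq_abs, Real.norm_eq_abs]
          exact add_le_add (mul_le_mul (hbM τ hτ) (hv₁Rb τ hτ) (norm_nonneg _) hM0.le)
            (mul_le_mul (habM τ hτ) (hv₂Rb τ hτ) (norm_nonneg _) (by positivity))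
  have hq₁b : ∀ τ ∈ Set.Icc s L, ‖p₁' τ‖ ≤ Q1 := by
    intro τ hτ
    rw [hp₁'def, hQ1def]
    have habs : |2 * a' τ * b τ + 2 * a τ * b' τ| ≤ 2 * M * M + 2 * M * M :=
      le_trans (abs_add_le _ _) (add_le_add (ha'bM τ hτ) (hab'M τ hτ))
    calc ‖(b τ • v₁' τ + b' τ • v₁ τ)
        + ((2 * a τ * b τ) • v₂' τ + (2 * a' τ * b τ + 2 * a τ * b' τ) • v₂ τ)‖
        ≤ (‖b τ • v₁' τ‖ + ‖b' τ • v₁ τ‖)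
          + (‖(2 * a τ * b τ) • v₂' τ‖ + ‖(2 * a' τ * b τ + 2 * a τ * b' τ) • v₂ τ‖) :=
          le_trans (norm_add_le _ _) (add_le_add (norm_add_le _ _) (norm_add_le _ _))
      _ ≤ (M * (M * D) + M * (M * R))
          + ((2 * M * M) * (M * D) + (2 * M * M + 2 * M * M) * (M * R)) := by
          rw [norm_smul, norm_smul, norm_smul, norm_smul,
            Real.norm_eq_abs, Real.norm_eq_abs, Real.norm_eq_abs, Real.norm_eq_abs]
          refine add_le_add (add_le_add ?_ ?_) (add_le_add ?_ ?_)
          · exact mul_le_mul (hbM τ hτ) (hv₁'b τ hτ) (norm_nonneg _) hM0.le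
          · exact mul_le_mul (hb'M τ hτ) (hv₁Rb τ hτ) (norm_nonneg _) hM0.le
          · exact mul_le_mul (habM τ hτ) (hv₂'b τ hτ) (norm_nonneg _) (by positivity)
          · exact mul_le_mul habs (hv₂Rb τ hτ) (norm_nonneg _) (by positivity)
  have hp₂b : ∀ τ ∈ Set.Icc s L, ‖p₂ τ‖ ≤ P2 := by
    intro τ hτ
    rw [hp₂def, hP2def]
    rw [norm_smul, Real.norm_eq_abs]
    exact mul_le_mul (hbsqM τ hτ) (hv₂Rb τ hτ) (norm_nonneg _) (by positivity)
  have hq₂b : ∀ τ ∈ Set.Icc s L, ‖p₂' τ‖ ≤ Q2 := by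
    intro τ hτ
    rw [hp₂'def, hQ2def]
    calc ‖(-(b τ ^ 2 / 2)) • v₂' τ + (-(b τ * b' τ)) • v₂ τ‖
        ≤ ‖(-(b τ ^ 2 / 2)) • v₂' τ‖ + ‖(-(b τ * b' τ)) • v₂ τ‖ := norm_add_le _ _
      _ ≤ (M * M / 2) * (M * D) + (M * M) * (M * R) := by
          rw [norm_smul, norm_smul, Real.norm_eq_abs, Real.norm_eq_abs]
          exact add_le_add (mul_le_mul (hbsqM τ hτ) (hv₂'b τ hτ) (norm_nonneg _) (by positivity))
            (mul_le_mul (hbb'M τ hτ) (hv₂Rb τ hτ) (norm_nonneg _) (by positivity))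
  -- the forcing term
  set fe : ℝ → X := fun τ => Real.sin (ε⁻¹ * τ) • p₁ τ + Real.cos (2 * ε⁻¹ * τ) • p₂ τ
    with hfedef
  have hfec : ContinuousOn fe (Set.Icc s L) := by
    rw [hfedef]
    exact (((Real.continuous_sin.comp (continuous_const.mul continuous_id)).continuousOn).smul
        hp₁c).add
      (((Real.continuous_cos.comp (continuous_const.mul continuous_id)).continuousOn).smul hp₂c)
  have hFb : ∀ t ∈ Set.Icc s L, ‖∫ τ in s..t, fe τ‖ ≤ Cf * ε := by
    intro t ht
    have hsub : Set.Icc s t ⊆ Set.Icc s L := Set.Icc_subset_Icc (le_refl s) ht.2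
    have hi1 : IntervalIntegrable (fun τ => Real.sin (ε⁻¹ * τ) • p₁ τ) volume s t := by
      apply ContinuousOn.intervalIntegrable
      rw [Set.uIcc_of_le ht.1]
      exact ((Real.continuous_sin.comp
        (continuous_const.mul continuous_id)).continuousOn).smul (hp₁c.mono hsub)
    have hi2 : IntervalIntegrable (fun τ => Real.cos (2 * ε⁻¹ * τ) • p₂ τ) volume s t := by
      apply ContinuousOn.intervalIntegrable
      rw [Set.uIcc_of_le ht.1]
      exact ((Real.continuous_cos.comp
        (continuous_const.mul continuous_id)).continuousOn).smul (hp₂c.mono hsub)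
    have h1 : ‖∫ τ in s..t, Real.sin (ε⁻¹ * τ) • p₁ τ‖ ≤ (1/ε⁻¹) * (2*P1 + Q1*(t-s)) :=
      osc_est p₁ p₁' s t ε⁻¹ Q1 P1 ht.1 (inv_pos.2 hε)
        (fun τ hτ => hp₁d τ (hsub hτ)) (hp₁'c.mono hsub)
        (fun τ hτ => hq₁b τ (hsub hτ)) (fun τ hτ => hp₁b τ (hsub hτ))
        Real.sin (fun x => -Real.cos x)
        (fun x => by exact (Real.hasDerivAt_cos x).neg.congr_deriv (by simp))
        (fun x => by rw [abs_neg]; exact Real.abs_cos_le_one x) Real.continuous_sin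
    have h2 : ‖∫ τ in s..t, Real.cos (2 * ε⁻¹ * τ) • p₂ τ‖ ≤ (1/(2*ε⁻¹)) * (2*P2 + Q2*(t-s)) :=
      osc_est p₂ p₂' s t (2*ε⁻¹) Q2 P2 ht.1 (by positivity)
        (fun τ hτ => hp₂d τ (hsub hτ)) (hp₂'c.mono hsub)
        (fun τ hτ => hq₂b τ (hsub hτ)) (fun τ hτ => hp₂b τ (hsub hτ))
        Real.cos Real.sin (fun x => Real.hasDerivAt_sin x)
        (fun x => Real.abs_sin_le_one x) Real.continuous_cos
    have hts : t - s ≤ L - s := by linarith [ht.2]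
    have e1 : (1:ℝ)/ε⁻¹ = ε := by field_simp
    have e2 : (1:ℝ)/(2*ε⁻¹) = ε/2 := by field_simp; try ring
    have k1 : (1/ε⁻¹) * (2*P1 + Q1*(t-s)) ≤ (2*P1 + Q1*(L-s)) * ε := by
      rw [e1]
      have hle : 2*P1 + Q1*(t-s) ≤ 2*P1 + Q1*(L-s) := by
        have := mul_le_mul_of_nonneg_left hts hQ10
        linarith
      calc ε * (2*P1 + Q1*(t-s)) ≤ ε * (2*P1 + Q1*(L-s)) :=
            mul_le_mul_of_nonneg_left hle hε.le
        _ = (2*P1 + Q1*(L-s)) * ε := mul_comm _ _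
    have k2 : (1/(2*ε⁻¹)) * (2*P2 + Q2*(t-s)) ≤ (2*P2 + Q2*(L-s)) * ε := by
      rw [e2]
      have hle : 2*P2 + Q2*(t-s) ≤ 2*P2 + Q2*(L-s) := by
        have := mul_le_mul_of_nonneg_left hts hQ20
        linarith
      have h0 : 0 ≤ 2*P2 + Q2*(t-s) := le_trans (norm_nonneg _)
        (le_trans (hp₂b s hmemS) (by
          have := mul_nonneg hQ20 (by linarith [ht.1] : (0:ℝ) ≤ t - s)
          linarith))
      calc (ε/2) * (2*P2 + Q2*(t-s)) ≤ ε * (2*P2 + Q2*(L-s)) :=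
            mul_le_mul (by linarith) hle h0 hε.le
        _ = (2*P2 + Q2*(L-s)) * ε := mul_comm _ _
    simp only [hfedef]
    rw [intervalIntegral.integral_add hi1 hi2]
    calc ‖(∫ τ in s..t, Real.sin (ε⁻¹ * τ) • p₁ τ)
        + ∫ τ in s..t, Real.cos (2 * ε⁻¹ * τ) • p₂ τ‖
        ≤ ‖∫ τ in s..t, Real.sin (ε⁻¹ * τ) • p₁ τ‖
          + ‖∫ τ in s..t, Real.cos (2 * ε⁻¹ * τ) • p₂ τ‖ := norm_add_le _ _
      _ ≤ (2*P1 + Q1*(L-s)) * ε + (2*P2 + Q2*(L-s)) * ε := by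
          have := le_trans h1 k1; have := le_trans h2 k2; linarith
      _ = Cf * ε := by rw [hCfdef]; ring
  -- the primitive of (an extension of) the forcing term
  set g : ℝ → X := fun τ => fe (max s (min τ L)) with hgdef
  have hgc : Continuous g := by
    rw [hgdef]
    apply hfec.comp_continuous (continuous_const.max (continuous_id.min continuous_const))
    intro x
    exact ⟨le_max_left _ _, max_le hsL' (min_le_right _ _)⟩
  have hgeq : ∀ τ ∈ Set.Icc s L, g τ = fe τ := by
    intro τ hτ
    simp only [hgdef]
    rw [min_eq_left hτ.2, max_eq_right hτ.1]
  set F : ℝ → X := fun x => ∫ τ in s..x, g τ with hFdef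
  have hFd : ∀ x : ℝ, HasDerivAt F (g x) x :=
    fun x => (hgc.integral_hasStrictDerivAt s x).hasDerivAt
  have hFs : F s = 0 := by rw [hFdef]; simp
  have hFeq : ∀ x ∈ Set.Icc s L, F x = ∫ τ in s..x, fe τ := by
    intro x hx
    rw [hFdef]
    apply intervalIntegral.integral_congr
    intro τ hτ
    rw [Set.uIcc_of_le hx.1] at hτ
    exact hgeq τ ⟨hτ.1, le_trans hτ.2 hx.2⟩
  have hFbb : ∀ x ∈ Set.Icc s L, ‖F x‖ ≤ Cf * ε := by
    intro x hx; rw [hFeq x hx]; exact hFb x hx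
  -- the difference and the shifted difference
  have hδd : ∀ τ ∈ Set.Icc s L, HasDerivAt (fun x => ψ ε x - ψav x)
      ((a τ • (v₁ τ - w₁ τ) + (a τ^2 + b τ^2/2) • (v₂ τ - w₂ τ)) + fe τ) τ := by
    intro τ hτ
    have h := (hψ' τ hτ).sub (hψav' τ hτ)
    refine h.congr_deriv (Eq.symm ?_)
    simp only [hfedef, hp₁def, hp₂def, hdψdef, hudef]
    have hsq : Real.sin (ε⁻¹*τ)^2 = 1/2 - Real.cos (2*ε⁻¹*τ)/2 := by
      rw [mul_assoc]
      exact Real.sin_sq_eq_half_sub _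
    match_scalars <;> first
      | ring1
      | linear_combination (-(b τ)^2) * hsq
  have hηd : ∀ τ ∈ Set.Icc s L, HasDerivAt (fun x => ψ ε x - ψav x - F x)
      (a τ • (v₁ τ - w₁ τ) + (a τ^2 + b τ^2/2) • (v₂ τ - w₂ τ)) τ := by
    intro τ hτ
    have h := (hδd τ hτ).sub (hFd τ)
    rw [hgeq τ hτ] at h
    refine h.congr_deriv (Eq.symm ?_)
    abel
  -- the linear part is Lipschitz in the difference
  have hAb : ∀ τ ∈ Set.Icc s L, ‖a τ • (v₁ τ - w₁ τ) + (a τ^2 + b τ^2/2) • (v₂ τ - w₂ τ)‖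
      ≤ K * ‖ψ ε τ - ψav τ‖ := by
    intro τ hτ
    have e1 : ‖v₁ τ - w₁ τ‖ ≤ M * ‖ψ ε τ - ψav τ‖ := by
      simp only [hv₁def, hw₁def, ← smul_sub, ← map_sub]
      rw [norm_smul, norm_neg, Complex.norm_I, one_mul]
      exact le_trans (B₁.le_opNorm _) (mul_le_mul_of_nonneg_right hB₁M (norm_nonneg _))
    have e2 : ‖v₂ τ - w₂ τ‖ ≤ M * ‖ψ ε τ - ψav τ‖ := by
      simp only [hv₂def, hw₂def, ← smul_sub, ← map_sub]
      rw [norm_smul, norm_neg, Complex.norm_I, one_mul]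
      exact le_trans (B₂.le_opNorm _) (mul_le_mul_of_nonneg_right hB₂M (norm_nonneg _))
    have ha2 : |a τ^2 + b τ^2/2| ≤ M*M + M*M/2 := by
      have h1 : a τ^2 ≤ M*M := by
        have := abs_le.mp (haM τ hτ); nlinarith [this.1, this.2]
      have h2 : b τ^2 ≤ M*M := by
        have := abs_le.mp (hbM τ hτ); nlinarith [this.1, this.2]
      rw [abs_of_nonneg (by positivity)]
      linarith
    have hN : 0 ≤ ‖ψ ε τ - ψav τ‖ := norm_nonneg _
    calc ‖a τ • (v₁ τ - w₁ τ) + (a τ^2 + b τ^2/2) • (v₂ τ - w₂ τ)‖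
        ≤ ‖a τ • (v₁ τ - w₁ τ)‖ + ‖(a τ^2 + b τ^2/2) • (v₂ τ - w₂ τ)‖ := norm_add_le _ _
      _ = |a τ| * ‖v₁ τ - w₁ τ‖ + |a τ^2 + b τ^2/2| * ‖v₂ τ - w₂ τ‖ := by
          rw [norm_smul, norm_smul, Real.norm_eq_abs, Real.norm_eq_abs]
      _ ≤ M * (M * ‖ψ ε τ - ψav τ‖) + (M*M + M*M/2) * (M * ‖ψ ε τ - ψav τ‖) :=
          add_le_add (mul_le_mul (haM τ hτ) e1 (norm_nonneg _) hM0.le)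
            (mul_le_mul ha2 e2 (norm_nonneg _) (by positivity))
      _ ≤ K * ‖ψ ε τ - ψav τ‖ := by
          rw [hKdef]
          nlinarith [mul_nonneg (mul_nonneg hN hM0.le) hM0.le, hM1]
  -- Gronwall for the shifted difference
  have hηc : ContinuousOn (fun x => ψ ε x - ψav x - F x) (Set.Icc s L) :=
    fun x hx => ((hηd x hx).continuousAt).continuousWithinAt
  have hη0 : ‖ψ ε s - ψav s - F s‖ ≤ 0 := by
    rw [hψs ε hε, hψavs, hFs]; simp
  have hgron := norm_le_gronwallBound_of_norm_deriv_right_le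
    (f := fun x => ψ ε x - ψav x - F x)
    (f' := fun τ => a τ • (v₁ τ - w₁ τ) + (a τ^2 + b τ^2/2) • (v₂ τ - w₂ τ))
    (δ := 0) (K := K) (ε := K * (Cf * ε)) hηc
    (fun x hx => (hηd x (Set.Ico_subset_Icc_self hx)).hasDerivWithinAt) hη0
    (fun x hx => by
      refine le_trans (hAb x (Set.Ico_subset_Icc_self hx)) ?_
      have hd : ‖ψ ε x - ψav x‖ ≤ ‖ψ ε x - ψav x - F x‖ + ‖F x‖ := by
        have h : ψ ε x - ψav x = (ψ ε x - ψav x - F x) + F x := by abel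
        calc ‖ψ ε x - ψav x‖ = ‖(ψ ε x - ψav x - F x) + F x‖ := by rw [← h]
          _ ≤ ‖ψ ε x - ψav x - F x‖ + ‖F x‖ := norm_add_le _ _
      have hF := hFbb x (Set.Ico_subset_Icc_self hx)
      calc K * ‖ψ ε x - ψav x‖
          ≤ K * (‖ψ ε x - ψav x - F x‖ + Cf * ε) :=
            mul_le_mul_of_nonneg_left (by linarith) hK0.le
        _ = K * ‖ψ ε x - ψav x - F x‖ + K * (Cf * ε) := by ring)
  intro t ht
  have hb1 := hgron t ht
  simp only [gronwallBound_of_K_ne_0 hK0.ne', zero_mul, zero_add] at hb1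
  have hKC : K * (Cf * ε) / K = Cf * ε := by field_simp
  rw [hKC] at hb1
  set E : ℝ := Real.exp (K * (L - s)) with hEdef
  have hE0 : 0 < E := Real.exp_pos _
  have hexp : Real.exp (K * (t - s)) - 1 ≤ E := by
    have h1 : Real.exp (K * (t - s)) ≤ E := by
      rw [hEdef]
      exact Real.exp_le_exp.mpr (mul_le_mul_of_nonneg_left (by linarith [ht.2]) hK0.le)
    linarith
  have hb2 : ‖ψ ε t - ψav t - F t‖ ≤ Cf * ε * E := by
    refine le_trans hb1 ?_
    exact mul_le_mul_of_nonneg_left hexp (by positivity)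
  have hFt := hFbb t ht
  have hd : ‖ψ ε t - ψav t‖ ≤ ‖ψ ε t - ψav t - F t‖ + ‖F t‖ := by
    have h : ψ ε t - ψav t = (ψ ε t - ψav t - F t) + F t := by abel
    calc ‖ψ ε t - ψav t‖ = ‖(ψ ε t - ψav t - F t) + F t‖ := by rw [← h]
      _ ≤ ‖ψ ε t - ψav t - F t‖ + ‖F t‖ := norm_add_le _ _
  have hfin : (Cf + 1) * (E + 1) * ε = Cf * ε * E + Cf * ε + ε * E + ε := by ring
  have h1 : 0 ≤ ε * E := by positivity
  linarith
end
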